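/- arXiv:1703.04905 — 3 statements merged into one kernel-verified Lean document; each statement's English description precedes it below -/
import Mathlib

section
/- For every p with 1 ≤ p < 2 there exists δ = δ(p) > 0 such that for every R > 0 there is a constant C = C(p,R) > 0 with the following property: for every a ∈ ℂ with a ≠ 0, the function u ↦ 1/(u(√u − a)) satisfies ‖u ↦ 1/(u(√u − a))‖_{L^p({u ∈ ℂ : |u| < R})} ≤ C(1 + |a|^{−1+δ}). -/
open MeasureTheory Complex Metric Set
open scoped ENNReal NNReal

lemma radial_bound {γ : ℝ} (h0 : 0 ≤ γ) (h2 : γ < 2) :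
    ∃ K : ℝ, 0 < K ∧ ∀ s : ℝ, 0 < s →
      (∫⁻ u in Metric.ball (0:ℂ) s, ENNReal.ofReal (‖u‖ ^ (-γ))) ≤
        ENNReal.ofReal (K * s ^ (2 - γ)) := by
  set r : ℝ := (2:ℝ) ^ (γ - 2) with hrdef
  have hr0 : 0 < r := Real.rpow_pos_of_pos two_pos _
  have hr1 : r < 1 := Real.rpow_lt_one_of_one_lt_of_neg (by norm_num) (by linarith)
  set V : ℝ := (volume (Metric.ball (0:ℂ) 1)).toReal with hVdef
  have hVfin : volume (Metric.ball (0:ℂ) 1) ≠ ⊤ := measure_ball_lt_top.ne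
  have hV0 : 0 ≤ V := ENNReal.toReal_nonneg
  have hKpos : 0 < (2:ℝ)^γ * V * (1 - r)⁻¹ + 1 := by
    have h1r : (0:ℝ) ≤ (1-r)⁻¹ := inv_nonneg.mpr (by linarith)
    have := mul_nonneg (mul_nonneg (Real.rpow_nonneg (by norm_num : (0:ℝ) ≤ 2) γ) hV0) h1r
    linarith
  refine ⟨(2:ℝ)^γ * V * (1 - r)⁻¹ + 1, hKpos, fun s hs => ?_⟩
  set A : ℕ → Set ℂ := fun k =>
    (fun u : ℂ => ‖u‖) ⁻¹' (Set.Ico (s * (2:ℝ)⁻¹ ^ (k+1)) (s * (2:ℝ)⁻¹ ^ k)) with hAdef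
  have hcov : Metric.ball (0:ℂ) s ⊆ {0} ∪ ⋃ k : ℕ, A k := by
    intro u hu
    rcases eq_or_ne u 0 with h | h
    · exact Or.inl h
    right
    have hu0 : 0 < ‖u‖ := norm_pos_iff.mpr h
    have hus : ‖u‖ < s := mem_ball_zero_iff.mp hu
    have hex : ∃ n : ℕ, s * (2:ℝ)⁻¹ ^ (n+1) ≤ ‖u‖ := by
      obtain ⟨n, hn⟩ := exists_pow_lt_of_lt_one (div_pos hu0 hs) (by norm_num : (2:ℝ)⁻¹ < 1)
      refine ⟨n, ?_⟩
      have : (2:ℝ)⁻¹ ^ (n+1) ≤ (2:ℝ)⁻¹ ^ n := by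
        apply pow_le_pow_of_le_one (by norm_num) (by norm_num); omega
      have := this.trans hn.le
      calc s * (2:ℝ)⁻¹ ^ (n+1) ≤ s * (‖u‖ / s) := by
            apply mul_le_mul_of_nonneg_left _ hs.le
            exact le_trans (by apply pow_le_pow_of_le_one (by norm_num) (by norm_num); omega) hn.le
        _ = ‖u‖ := by field_simp
    refine Set.mem_iUnion.mpr ⟨Nat.find hex, Nat.find_spec hex, ?_⟩
    rcases Nat.eq_zero_or_pos (Nat.find hex) with h0' | h0'
    · rw [h0']; simpa using hus
    · have := Nat.find_min hex (m := Nat.find hex - 1) (by omega)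
      have heq : Nat.find hex - 1 + 1 = Nat.find hex := by omega
      rw [heq] at this
      exact lt_of_not_ge this
  have hterm : ∀ k : ℕ, (∫⁻ u in A k, ENNReal.ofReal (‖u‖ ^ (-γ))) ≤
      ENNReal.ofReal (s ^ (2-γ) * (2:ℝ)^γ * r ^ k) * volume (Metric.ball (0:ℂ) 1) := by
    intro k
    have hpos : 0 < s * (2:ℝ)⁻¹ ^ (k+1) := by positivity
    have hAk : MeasurableSet (A k) := measurable_norm measurableSet_Ico
    calc (∫⁻ u in A k, ENNReal.ofReal (‖u‖ ^ (-γ)))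
        ≤ ∫⁻ _ in A k, ENNReal.ofReal ((s * (2:ℝ)⁻¹ ^ (k+1)) ^ (-γ)) := by
          apply lintegral_mono_ae
          filter_upwards [ae_restrict_mem hAk] with u hu
          exact ENNReal.ofReal_le_ofReal
            (Real.rpow_le_rpow_of_nonpos hpos hu.1 (neg_nonpos.mpr h0))
      _ = ENNReal.ofReal ((s * (2:ℝ)⁻¹ ^ (k+1)) ^ (-γ)) * volume (A k) :=
          setLIntegral_const _ _
      _ ≤ ENNReal.ofReal ((s * (2:ℝ)⁻¹ ^ (k+1)) ^ (-γ)) *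
            (ENNReal.ofReal ((s * (2:ℝ)⁻¹ ^ k) ^ (2:ℕ)) * volume (Metric.ball (0:ℂ) 1)) := by
          gcongr
          have hsub : A k ⊆ Metric.ball (0:ℂ) (s * (2:ℝ)⁻¹ ^ k) := fun u hu =>
            mem_ball_zero_iff.mpr hu.2
          calc volume (A k) ≤ volume (Metric.ball (0:ℂ) (s * (2:ℝ)⁻¹ ^ k)) :=
                measure_mono hsub
            _ = ENNReal.ofReal ((s * (2:ℝ)⁻¹ ^ k) ^ (2:ℕ)) * volume (Metric.ball (0:ℂ) 1) := by
                rw [Measure.addHaar_ball volume 0 (by positivity)]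
                norm_num [Complex.finrank_real_complex]
      _ = ENNReal.ofReal (s ^ (2-γ) * (2:ℝ)^γ * r ^ k) * volume (Metric.ball (0:ℂ) 1) := by
          rw [← mul_assoc, ← ENNReal.ofReal_mul (by positivity)]
          congr 2
          -- real identity
          have hb : ∀ n : ℕ, ((2:ℝ)⁻¹) ^ n = (2:ℝ) ^ (-(n:ℝ)) := by
            intro n
            rw [Real.rpow_neg (by norm_num), Real.rpow_natCast, inv_pow]
          rw [hb, hb, hrdef]
          rw [Real.mul_rpow hs.le (Real.rpow_nonneg (by norm_num) _),
              ← Real.rpow_natCast (s * (2:ℝ)^(-(k:ℝ))) 2,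
              Real.mul_rpow hs.le (Real.rpow_nonneg (by norm_num) _),
              ← Real.rpow_natCast ((2:ℝ)^(γ-2)) k,
              ← Real.rpow_mul (by norm_num : (0:ℝ) ≤ 2),
              ← Real.rpow_mul (by norm_num : (0:ℝ) ≤ 2),
              ← Real.rpow_mul (by norm_num : (0:ℝ) ≤ 2)]
          rw [mul_mul_mul_comm, ← Real.rpow_add hs, ← Real.rpow_add (by norm_num : (0:ℝ) < 2),
              mul_assoc, ← Real.rpow_add (by norm_num : (0:ℝ) < 2)]
          congr 1
          · congr 1; push_cast; ring
          · congr 1; push_cast; ring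
  have hgeo : ∑' k : ℕ, (ENNReal.ofReal (s ^ (2-γ) * (2:ℝ)^γ) * volume (Metric.ball (0:ℂ) 1))
      * (ENNReal.ofReal r) ^ k
      = (ENNReal.ofReal (s ^ (2-γ) * (2:ℝ)^γ) * volume (Metric.ball (0:ℂ) 1))
        * (1 - ENNReal.ofReal r)⁻¹ := by
    rw [ENNReal.tsum_mul_left, ENNReal.tsum_geometric]
  calc (∫⁻ u in Metric.ball (0:ℂ) s, ENNReal.ofReal (‖u‖ ^ (-γ)))
      ≤ ∫⁻ u in ({0} ∪ ⋃ k : ℕ, A k : Set ℂ), ENNReal.ofReal (‖u‖ ^ (-γ)) :=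
        lintegral_mono_set hcov
    _ ≤ (∫⁻ u in ({0} : Set ℂ), ENNReal.ofReal (‖u‖ ^ (-γ))) +
        ∫⁻ u in ⋃ k : ℕ, A k, ENNReal.ofReal (‖u‖ ^ (-γ)) := lintegral_union_le _ _ _
    _ ≤ 0 + ∑' k : ℕ, ∫⁻ u in A k, ENNReal.ofReal (‖u‖ ^ (-γ)) := by
        gcongr
        · rw [setLIntegral_measure_zero _ _ (measure_singleton 0)]
        · exact lintegral_iUnion_le _ _
    _ ≤ 0 + ∑' k : ℕ, ENNReal.ofReal (s ^ (2-γ) * (2:ℝ)^γ * r ^ k) * volume (Metric.ball (0:ℂ) 1) := by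
        gcongr with k
        exact hterm k
    _ = (ENNReal.ofReal (s ^ (2-γ) * (2:ℝ)^γ) * volume (Metric.ball (0:ℂ) 1))
        * (1 - ENNReal.ofReal r)⁻¹ := by
        rw [zero_add, ← hgeo]
        congr 1 with k
        rw [ENNReal.ofReal_mul (by positivity), ENNReal.ofReal_pow hr0.le]
        ring
    _ ≤ ENNReal.ofReal (((2:ℝ)^γ * V * (1 - r)⁻¹ + 1) * s ^ (2 - γ)) := by
        have h1r : (0:ℝ) < 1 - r := by linarith
        rw [← ENNReal.ofReal_one, ← ENNReal.ofReal_sub _ hr0.le]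
        rw [← ENNReal.ofReal_toReal hVfin, ← hVdef,
            ← ENNReal.ofReal_inv_of_pos h1r,
            ← ENNReal.ofReal_mul (by positivity), ← ENNReal.ofReal_mul (by positivity)]
        apply ENNReal.ofReal_le_ofReal
        have hs2 : (0:ℝ) ≤ s ^ (2-γ) := Real.rpow_nonneg hs.le _
        have h2g : (0:ℝ) ≤ (2:ℝ)^γ := Real.rpow_nonneg (by norm_num) _
        have hinv : (0:ℝ) ≤ (1-r)⁻¹ := inv_nonneg.mpr h1r.le
        nlinarith [mul_nonneg (mul_nonneg h2g hV0) hinv]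

private lemma aux_rpow_le {b e M : ℝ} (hb : 1 ≤ b) (heM : e ≤ M) :
    b ^ e ≤ b ^ M := Real.rpow_le_rpow_of_exponent_le hb heM

private lemma two_rpow_nat (n : ℕ) : (2:ℝ) ^ (n:ℝ) = (2:ℝ) ^ n := Real.rpow_natCast 2 n

lemma conv_bound {α β q R : ℝ} (hα0 : 0 ≤ α) (hα : α < 2) (hβ0 : 0 ≤ β) (hβ : β < 2)
    (hq0 : 0 ≤ q) (hq4 : q ≤ 4) (hs0 : 0 ≤ α + β - q) (hs2 : α + β - q < 2)
    (hab : α + β ≤ 4) (hR : 0 < R) :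
    ∃ K : ℝ, 0 < K ∧ ∀ c : ℂ, c ≠ 0 →
      (∫⁻ u in Metric.ball (0:ℂ) R, ENNReal.ofReal (‖u‖ ^ (-α) * ‖u - c‖ ^ (-β))) ≤
        ENNReal.ofReal (K * (‖c‖ ^ (2 - α - β) + ‖c‖ ^ (-q))) := by
  obtain ⟨K1, hK1, hK1b⟩ := radial_bound hα0 hα
  obtain ⟨K2, hK2, hK2b⟩ := radial_bound hβ0 hβ
  obtain ⟨K3, hK3, hK3b⟩ := radial_bound hs0 hs2
  refine ⟨16 * K1 + 16 * K2 + 256 * K3 * R ^ (2 - (α + β - q)) + 1, by positivity,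
    fun c hc => ?_⟩
  set m : ℝ := ‖c‖ with hmdef
  have hm : 0 < m := norm_pos_iff.mpr hc
  set S1 : Set ℂ := Metric.ball (0:ℂ) (m/2) with hS1def
  set S2 : Set ℂ := Metric.ball c (m/2) with hS2def
  set T : Set ℂ := Metric.ball (0:ℂ) R \ (S1 ∪ S2) with hTdef
  have hcov : Metric.ball (0:ℂ) R ⊆ S1 ∪ S2 ∪ T := by
    intro u hu
    by_cases h : u ∈ S1 ∪ S2
    · exact Or.inl h
    · exact Or.inr ⟨hu, h⟩
  set F : ℂ → ℝ≥0∞ := fun u => ENNReal.ofReal (‖u‖ ^ (-α) * ‖u - c‖ ^ (-β)) with hFdef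
  -- S1 bound
  have hm2 : (0:ℝ) < m/2 := by positivity
  have hI1 : (∫⁻ u in S1, F u) ≤ ENNReal.ofReal (4 * K1 * m ^ (2 - α - β)) := by
    have hb : ∀ u ∈ S1, F u ≤
        ENNReal.ofReal ((m/2) ^ (-β)) * ENNReal.ofReal (‖u‖ ^ (-α)) := by
      intro u hu
      have h1 : ‖u‖ < m/2 := mem_ball_zero_iff.mp hu
      have huc : m/2 ≤ ‖u - c‖ := by
        have h2 : ‖c‖ - ‖u‖ ≤ ‖c - u‖ := norm_sub_norm_le c u
        have h3 : ‖c - u‖ = ‖u - c‖ := norm_sub_rev c u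
        rw [← hmdef] at h2
        linarith
      rw [hFdef, ← ENNReal.ofReal_mul (Real.rpow_nonneg hm2.le _), mul_comm]
      apply ENNReal.ofReal_le_ofReal
      exact mul_le_mul_of_nonneg_left
        (Real.rpow_le_rpow_of_nonpos hm2 huc (neg_nonpos.mpr hβ0))
        (Real.rpow_nonneg (norm_nonneg u) _)
    calc (∫⁻ u in S1, F u)
        ≤ ∫⁻ u in S1, ENNReal.ofReal ((m/2) ^ (-β)) * ENNReal.ofReal (‖u‖ ^ (-α)) := by
          apply lintegral_mono_ae
          filter_upwards [ae_restrict_mem measurableSet_ball] with u hu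
          exact hb u hu
      _ = ENNReal.ofReal ((m/2) ^ (-β)) * ∫⁻ u in S1, ENNReal.ofReal (‖u‖ ^ (-α)) :=
          lintegral_const_mul' _ _ ENNReal.ofReal_ne_top
      _ ≤ ENNReal.ofReal ((m/2) ^ (-β)) * ENNReal.ofReal (K1 * (m/2) ^ (2 - α)) := by
          gcongr
          exact hK1b _ hm2
      _ ≤ ENNReal.ofReal (4 * K1 * m ^ (2 - α - β)) := by
          rw [← ENNReal.ofReal_mul (Real.rpow_nonneg hm2.le _)]
          apply ENNReal.ofReal_le_ofReal
          have hrw : (m/2:ℝ) ^ (-β) * (K1 * (m/2) ^ (2 - α))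
              = K1 * ((m/2) ^ (2 - α - β)) := by
            rw [mul_comm, mul_assoc, ← Real.rpow_add hm2]
            ring_nf
          rw [hrw]
          have hsplit : (m/2:ℝ) ^ (2 - α - β) = m ^ (2 - α - β) * (2:ℝ)⁻¹ ^ (2 - α - β) := by
            rw [div_eq_mul_inv, Real.mul_rpow hm.le (by norm_num)]
          have h4 : ((2:ℝ)⁻¹) ^ (2 - α - β) ≤ 4 := by
            rw [Real.inv_rpow (by norm_num), ← Real.rpow_neg (by norm_num)]
            calc (2:ℝ) ^ (-(2 - α - β)) ≤ (2:ℝ) ^ ((2:ℕ):ℝ) :=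
                  aux_rpow_le one_le_two (by push_cast; linarith)
              _ = 4 := by rw [two_rpow_nat]; norm_num
          rw [hsplit]
          have hmn : (0:ℝ) ≤ m ^ (2 - α - β) := Real.rpow_nonneg hm.le _
          nlinarith [mul_nonneg hK1.le hmn]
  -- S2 bound
  have hI2 : (∫⁻ u in S2, F u) ≤ ENNReal.ofReal (4 * K2 * m ^ (2 - α - β)) := by
    have hb : ∀ u ∈ S2, F u ≤
        ENNReal.ofReal ((m/2) ^ (-α)) * ENNReal.ofReal (‖u - c‖ ^ (-β)) := by
      intro u hu
      have h1 : ‖u - c‖ < m/2 := mem_ball_iff_norm.mp hu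
      have huc : m/2 ≤ ‖u‖ := by
        have h2 : ‖c‖ - ‖u - c‖ ≤ ‖u‖ := by
          have := norm_sub_norm_le c (c - u)
          simp only [sub_sub_cancel] at this
          have h3 : ‖c - u‖ = ‖u - c‖ := norm_sub_rev c u
          linarith
        rw [← hmdef] at h2
        linarith
      rw [hFdef, ← ENNReal.ofReal_mul (Real.rpow_nonneg hm2.le _)]
      apply ENNReal.ofReal_le_ofReal
      exact mul_le_mul_of_nonneg_right
        (Real.rpow_le_rpow_of_nonpos hm2 huc (neg_nonpos.mpr hα0))
        (Real.rpow_nonneg (norm_nonneg _) _)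
    have htrans : (∫⁻ u in S2, ENNReal.ofReal (‖u - c‖ ^ (-β)))
        = ∫⁻ w in Metric.ball (0:ℂ) (m/2), ENNReal.ofReal (‖w‖ ^ (-β)) := by
      have hmp : MeasurePreserving (fun w : ℂ => w + c) volume volume :=
        measurePreserving_add_right volume c
      have hemb : MeasurableEmbedding (fun w : ℂ => w + c) :=
        (MeasurableEquiv.addRight c).measurableEmbedding
      have himg : (fun w : ℂ => w + c) '' Metric.ball (0:ℂ) (m/2) = S2 := by
        ext v
        constructor
        · rintro ⟨w, hw, rfl⟩
          rw [hS2def, mem_ball_iff_norm, add_sub_cancel_right]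
          exact mem_ball_zero_iff.mp hw
        · intro hv
          exact ⟨v - c, mem_ball_zero_iff.mpr (mem_ball_iff_norm.mp hv), by ring⟩
      have := hmp.setLIntegral_comp_emb hemb
        (fun u => ENNReal.ofReal (‖u - c‖ ^ (-β))) (Metric.ball (0:ℂ) (m/2))
      rw [himg] at this
      rw [← this]
      congr 1 with w
      rw [add_sub_cancel_right]
    calc (∫⁻ u in S2, F u)
        ≤ ∫⁻ u in S2, ENNReal.ofReal ((m/2) ^ (-α)) * ENNReal.ofReal (‖u - c‖ ^ (-β)) := by
          apply lintegral_mono_ae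
          filter_upwards [ae_restrict_mem measurableSet_ball] with u hu
          exact hb u hu
      _ = ENNReal.ofReal ((m/2) ^ (-α)) * ∫⁻ u in S2, ENNReal.ofReal (‖u - c‖ ^ (-β)) :=
          lintegral_const_mul' _ _ ENNReal.ofReal_ne_top
      _ ≤ ENNReal.ofReal ((m/2) ^ (-α)) * ENNReal.ofReal (K2 * (m/2) ^ (2 - β)) := by
          rw [htrans]
          gcongr
          exact hK2b _ hm2
      _ ≤ ENNReal.ofReal (4 * K2 * m ^ (2 - α - β)) := by
          rw [← ENNReal.ofReal_mul (Real.rpow_nonneg hm2.le _)]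
          apply ENNReal.ofReal_le_ofReal
          have hrw : (m/2:ℝ) ^ (-α) * (K2 * (m/2) ^ (2 - β))
              = K2 * ((m/2) ^ (2 - α - β)) := by
            rw [mul_comm, mul_assoc, ← Real.rpow_add hm2]
            ring_nf
          rw [hrw]
          have hsplit : (m/2:ℝ) ^ (2 - α - β) = m ^ (2 - α - β) * (2:ℝ)⁻¹ ^ (2 - α - β) := by
            rw [div_eq_mul_inv, Real.mul_rpow hm.le (by norm_num)]
          have h4 : ((2:ℝ)⁻¹) ^ (2 - α - β) ≤ 4 := by
            rw [Real.inv_rpow (by norm_num), ← Real.rpow_neg (by norm_num)]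
            calc (2:ℝ) ^ (-(2 - α - β)) ≤ (2:ℝ) ^ ((2:ℕ):ℝ) :=
                  aux_rpow_le one_le_two (by push_cast; linarith)
              _ = 4 := by rw [two_rpow_nat]; norm_num
          rw [hsplit]
          have hmn : (0:ℝ) ≤ m ^ (2 - α - β) := Real.rpow_nonneg hm.le _
          nlinarith [mul_nonneg hK2.le hmn]
  -- T bound
  have hIT : (∫⁻ u in T, F u) ≤
      ENNReal.ofReal (256 * K3 * R ^ (2 - (α + β - q)) * m ^ (-q)) := by
    have hb : ∀ u ∈ T, F u ≤
        ENNReal.ofReal (256 * m ^ (-q)) * ENNReal.ofReal (‖u‖ ^ (-(α + β - q))) := by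
      intro u hu
      obtain ⟨huR, hnot⟩ := hu
      have hu1 : m/2 ≤ ‖u‖ := by
        by_contra h
        exact hnot (Or.inl (mem_ball_zero_iff.mpr (by linarith)))
      have hu2 : m/2 ≤ ‖u - c‖ := by
        by_contra h
        exact hnot (Or.inr (mem_ball_iff_norm.mpr (by linarith)))
      have hu0 : (0:ℝ) < ‖u‖ := lt_of_lt_of_le hm2 hu1
      have hkey : ‖u‖/4 ≤ ‖u - c‖ := by
        by_cases hcase : ‖u‖ ≤ 2*m
        · linarith
        · have : ‖u‖ - ‖c‖ ≤ ‖u - c‖ := norm_sub_norm_le u c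
          rw [← hmdef] at this
          linarith
      have step1 : ‖u‖ ^ (-α) * ‖u - c‖ ^ (-β) ≤ ‖u‖ ^ (-α) * (‖u‖/4) ^ (-β) :=
        mul_le_mul_of_nonneg_left
          (Real.rpow_le_rpow_of_nonpos (by positivity) hkey (neg_nonpos.mpr hβ0))
          (Real.rpow_nonneg hu0.le _)
      have step2 : ‖u‖ ^ (-α) * (‖u‖/4) ^ (-β)
          = (4:ℝ)⁻¹ ^ (-β) * (‖u‖ ^ (-q) * ‖u‖ ^ (-(α + β - q))) := by
        have e1 : ‖u‖ ^ (-q) * ‖u‖ ^ (-(α + β - q)) = ‖u‖ ^ (-α) * ‖u‖ ^ (-β) := by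
          rw [← Real.rpow_add hu0, ← Real.rpow_add hu0]
          ring_nf
        rw [div_eq_mul_inv, Real.mul_rpow hu0.le (by norm_num), e1]
        ring
      have h16 : ((4:ℝ)⁻¹) ^ (-β) ≤ 16 := by
        rw [Real.inv_rpow (by norm_num), ← Real.rpow_neg (by norm_num)]
        calc (4:ℝ) ^ (-(-β)) ≤ (4:ℝ) ^ ((2:ℕ):ℝ) :=
              aux_rpow_le (by norm_num) (by push_cast; linarith)
          _ = 16 := by rw [Real.rpow_natCast]; norm_num
      have hq16 : ‖u‖ ^ (-q) ≤ 16 * m ^ (-q) := by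
        have h1 : ‖u‖ ^ (-q) ≤ (m/2) ^ (-q) :=
          Real.rpow_le_rpow_of_nonpos hm2 hu1 (neg_nonpos.mpr hq0)
        have h2 : (m/2:ℝ) ^ (-q) = m ^ (-q) * (2:ℝ)⁻¹ ^ (-q) := by
          rw [div_eq_mul_inv, Real.mul_rpow hm.le (by norm_num)]
        have h3 : ((2:ℝ)⁻¹) ^ (-q) ≤ 16 := by
          rw [Real.inv_rpow (by norm_num), ← Real.rpow_neg (by norm_num)]
          calc (2:ℝ) ^ (-(-q)) ≤ (2:ℝ) ^ ((4:ℕ):ℝ) :=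
                aux_rpow_le one_le_two (by push_cast; linarith)
            _ = 16 := by rw [Real.rpow_natCast]; norm_num
        have hmq : (0:ℝ) ≤ m ^ (-q) := Real.rpow_nonneg hm.le _
        nlinarith
      rw [hFdef, ← ENNReal.ofReal_mul (by positivity)]
      apply ENNReal.ofReal_le_ofReal
      calc ‖u‖ ^ (-α) * ‖u - c‖ ^ (-β)
          ≤ (4:ℝ)⁻¹ ^ (-β) * (‖u‖ ^ (-q) * ‖u‖ ^ (-(α + β - q))) := by
            rw [← step2]; exact step1
        _ ≤ 16 * ((16 * m ^ (-q)) * ‖u‖ ^ (-(α + β - q))) := by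
            have h1 : (0:ℝ) ≤ ‖u‖ ^ (-(α+β-q)) := Real.rpow_nonneg hu0.le _
            have h2 : (0:ℝ) ≤ ‖u‖ ^ (-q) := Real.rpow_nonneg hu0.le _
            have h3 : (0:ℝ) ≤ m ^ (-q) := Real.rpow_nonneg hm.le _
            have h4 : ((4:ℝ)⁻¹) ^ (-β) * (‖u‖ ^ (-q) * ‖u‖ ^ (-(α + β - q)))
                ≤ 16 * (‖u‖ ^ (-q) * ‖u‖ ^ (-(α + β - q))) := by
              apply mul_le_mul_of_nonneg_right h16 (by positivity)
            have h5 : ‖u‖ ^ (-q) * ‖u‖ ^ (-(α + β - q))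
                ≤ (16 * m ^ (-q)) * ‖u‖ ^ (-(α + β - q)) :=
              mul_le_mul_of_nonneg_right hq16 h1
            calc ((4:ℝ)⁻¹) ^ (-β) * (‖u‖ ^ (-q) * ‖u‖ ^ (-(α + β - q)))
                ≤ 16 * (‖u‖ ^ (-q) * ‖u‖ ^ (-(α + β - q))) := h4
              _ ≤ 16 * ((16 * m ^ (-q)) * ‖u‖ ^ (-(α + β - q))) := by linarith
        _ = 256 * m ^ (-q) * ‖u‖ ^ (-(α + β - q)) := by ring
    have hTm : MeasurableSet T :=
      measurableSet_ball.diff (measurableSet_ball.union measurableSet_ball)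
    calc (∫⁻ u in T, F u)
        ≤ ∫⁻ u in T, ENNReal.ofReal (256 * m ^ (-q)) * ENNReal.ofReal (‖u‖ ^ (-(α + β - q))) := by
          apply lintegral_mono_ae
          filter_upwards [ae_restrict_mem hTm] with u hu
          exact hb u hu
      _ = ENNReal.ofReal (256 * m ^ (-q)) * ∫⁻ u in T, ENNReal.ofReal (‖u‖ ^ (-(α + β - q))) :=
          lintegral_const_mul' _ _ ENNReal.ofReal_ne_top
      _ ≤ ENNReal.ofReal (256 * m ^ (-q)) *
            ∫⁻ u in Metric.ball (0:ℂ) R, ENNReal.ofReal (‖u‖ ^ (-(α + β - q))) := by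
          gcongr
          exact diff_subset
      _ ≤ ENNReal.ofReal (256 * m ^ (-q)) * ENNReal.ofReal (K3 * R ^ (2 - (α + β - q))) := by
          gcongr
          exact hK3b _ hR
      _ ≤ ENNReal.ofReal (256 * K3 * R ^ (2 - (α + β - q)) * m ^ (-q)) := by
          rw [← ENNReal.ofReal_mul (by positivity)]
          apply ENNReal.ofReal_le_ofReal
          apply le_of_eq
          ring
  calc (∫⁻ u in Metric.ball (0:ℂ) R, F u)
      ≤ ∫⁻ u in S1 ∪ S2 ∪ T, F u := lintegral_mono_set hcov
    _ ≤ (∫⁻ u in S1 ∪ S2, F u) + ∫⁻ u in T, F u := lintegral_union_le _ _ _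
    _ ≤ ((∫⁻ u in S1, F u) + ∫⁻ u in S2, F u) + ∫⁻ u in T, F u := by
        gcongr; exact lintegral_union_le _ _ _
    _ ≤ ENNReal.ofReal (4 * K1 * m ^ (2 - α - β)) + ENNReal.ofReal (4 * K2 * m ^ (2 - α - β))
        + ENNReal.ofReal (256 * K3 * R ^ (2 - (α + β - q)) * m ^ (-q)) := by
        gcongr
    _ ≤ ENNReal.ofReal ((16 * K1 + 16 * K2 + 256 * K3 * R ^ (2 - (α + β - q)) + 1)
        * (m ^ (2 - α - β) + m ^ (-q))) := by
        rw [← ENNReal.ofReal_add (by positivity) (by positivity),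
            ← ENNReal.ofReal_add (by positivity) (by positivity)]
        apply ENNReal.ofReal_le_ofReal
        have h1 : (0:ℝ) ≤ m ^ (2 - α - β) := Real.rpow_nonneg hm.le _
        have h2 : (0:ℝ) ≤ m ^ (-q) := Real.rpow_nonneg hm.le _
        have h3 : (0:ℝ) ≤ K3 * R ^ (2 - (α + β - q)) :=
          mul_nonneg hK3.le (Real.rpow_nonneg hR.le _)
        nlinarith [mul_nonneg hK1.le h2, mul_nonneg hK2.le h2, mul_nonneg h3 h1,
          mul_nonneg hK1.le h1, mul_nonneg hK2.le h1, mul_nonneg h3 h2]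

private lemma add_rpow_le' {x y pp : ℝ} (hx : 0 ≤ x) (hy : 0 ≤ y) (hp : 0 ≤ pp) :
    (x + y) ^ pp ≤ 2 ^ pp * (x ^ pp + y ^ pp) := by
  have h2 : (0:ℝ) ≤ 2 ^ pp := Real.rpow_nonneg (by norm_num) _
  rcases le_total x y with h | h
  · calc (x + y) ^ pp ≤ (2 * y) ^ pp :=
        Real.rpow_le_rpow (by linarith) (by linarith) hp
      _ = 2 ^ pp * y ^ pp := Real.mul_rpow (by norm_num) hy
      _ ≤ 2 ^ pp * (x ^ pp + y ^ pp) := by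
        have := Real.rpow_nonneg hx pp
        nlinarith
  · calc (x + y) ^ pp ≤ (2 * x) ^ pp :=
        Real.rpow_le_rpow (by linarith) (by linarith) hp
      _ = 2 ^ pp * x ^ pp := Real.mul_rpow (by norm_num) hx
      _ ≤ 2 ^ pp * (x ^ pp + y ^ pp) := by
        have := Real.rpow_nonneg hy pp
        nlinarith

private lemma rpow_le_shift {b B t e : ℝ} (hb : 0 < b) (hbB : b ≤ B) (het : t ≤ e) :
    b ^ e ≤ B ^ (e - t) * b ^ t := by
  have h : b ^ e = b ^ (e - t) * b ^ t := by
    rw [← Real.rpow_add hb]; ring_nf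
  rw [h]
  exact mul_le_mul_of_nonneg_right
    (Real.rpow_le_rpow hb.le hbB (by linarith)) (Real.rpow_nonneg hb.le _)

private lemma cpow_half_norm {u : ℂ} (hu : u ≠ 0) : ‖u ^ (1/2 : ℂ)‖ = ‖u‖ ^ (1/2 : ℝ) := by
  rw [Complex.norm_cpow_of_ne_zero hu]
  norm_num

set_option maxHeartbeats 1000000 in
private lemma main_lintegral {p : ℝ} (hp1 : 1 ≤ p) (hp2 : p < 2) {R : ℝ} (hR : 0 < R) :
    ∃ C₀ : ℝ, 0 < C₀ ∧ ∀ a : ℂ, a ≠ 0 →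
      (∫⁻ u in Metric.ball (0:ℂ) R,
          ENNReal.ofReal (‖(1 : ℂ) / (u * (u ^ (1/2 : ℂ) - a))‖ ^ p)) ≤
        ENNReal.ofReal (C₀ * (1 + ‖a‖ ^ ((-1 + (2 - p)/2) * p))) := by
  obtain ⟨K₁, hK₁, hP₁⟩ := conv_bound (α := p/2) (β := p) (q := p - 1)
    (by linarith) (by linarith) (by linarith) hp2 (by linarith) (by linarith)
    (by linarith) (by linarith) (by linarith) hR
  obtain ⟨K₂, hK₂, hP₂⟩ := conv_bound (α := p) (β := p) (q := 3*p/2 - 1)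
    (by linarith) hp2 (by linarith) hp2 (by linarith) (by linarith)
    (by linarith) (by linarith) (by linarith) hR
  obtain ⟨Kr, hKr, hPr⟩ := radial_bound (γ := p) (by linarith) hp2
  set t : ℝ := (-1 + (2 - p)/2) * p with htdef
  have hsR : 0 < Real.sqrt R := Real.sqrt_pos.mpr hR
  set B₀ : ℝ := 2 * Real.sqrt R with hB₀def
  have hB₀ : 0 < B₀ := by positivity
  have ht4 : t ≤ 4 - 3*p := by nlinarith
  have ht2 : t ≤ 2 - 2*p := by nlinarith [sq_nonneg (p - 2)]
  set D₁ : ℝ := ((Real.sqrt R)⁻¹) ^ p * (Kr * R ^ (2 - p)) with hD₁def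
  have hD₁ : 0 ≤ D₁ := by positivity
  set C₂ : ℝ := 2 ^ p * (K₁ + K₂) * (B₀ ^ (4 - 3*p - t) + B₀ ^ (2 - 2*p - t)) with hC₂def
  have hC₂ : 0 ≤ C₂ := by positivity
  refine ⟨C₂ + D₁ + 1, by positivity, fun a ha => ?_⟩
  have hb : 0 < ‖a‖ := norm_pos_iff.mpr ha
  set b : ℝ := ‖a‖ with hbdef
  have hbt : 0 ≤ b ^ t := Real.rpow_nonneg hb.le _
  by_cases hcase : b ≤ B₀
  · -- case b ≤ 2√R : use convolution bounds
    set c : ℂ := a ^ 2 with hcdef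
    have hc : c ≠ 0 := pow_ne_zero 2 ha
    have hmb : ‖c‖ = b ^ (2:ℕ) := by rw [hcdef, norm_pow]
    have hpt : ∀ u : ℂ, u ≠ c →
        ‖(1 : ℂ) / (u * (u ^ (1/2 : ℂ) - a))‖ ^ p ≤
          2 ^ p * (‖u‖ ^ (-(p/2)) * ‖u - c‖ ^ (-p)
            + b ^ p * (‖u‖ ^ (-p) * ‖u - c‖ ^ (-p))) := by
      intro u huc
      rcases eq_or_ne u 0 with rfl | hu
      · have h0 : ((0:ℂ) * ((0:ℂ) ^ (1/2:ℂ) - a)) = 0 := zero_mul _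
        rw [h0, div_zero, norm_zero, Real.zero_rpow (by positivity : (0:ℝ) < p).ne']
        positivity
      · set w : ℂ := u ^ (1/2 : ℂ) with hwdef
        have hww : w * w = u := by
          rw [hwdef, ← Complex.cpow_add _ _ hu]
          norm_num
        have hwa : w ≠ a := fun h => huc (by
          rw [hcdef]; linear_combination (w + a) * h - hww)
        have hwa' : w ≠ -a := fun h => huc (by
          rw [hcdef]; linear_combination (w - a) * h - hww)
        have hfact : u - c = (w - a) * (w + a) := by
          rw [hcdef]; linear_combination -hww
        have hwa0 : w - a ≠ 0 := sub_ne_zero.mpr hwa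
        have hwa0' : w + a ≠ 0 := by
          intro h
          exact hwa' (eq_neg_of_add_eq_zero_left h)
        have huc0 : u - c ≠ 0 := sub_ne_zero.mpr huc
        have hfeq : (1 : ℂ) / (u * (w - a)) = (w + a) / (u * (u - c)) := by
          rw [hfact]
          field_simp
        have hunorm : (0:ℝ) < ‖u‖ := norm_pos_iff.mpr hu
        have hucn : (0:ℝ) < ‖u - c‖ := norm_pos_iff.mpr huc0
        have habs : ‖w‖ = ‖u‖ ^ (1/2 : ℝ) := cpow_half_norm hu
        have hnum : ‖w + a‖ ≤ ‖u‖ ^ (1/2:ℝ) + b := by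
          calc ‖w + a‖ ≤ ‖w‖ + ‖a‖ := norm_add_le w a
            _ = ‖u‖ ^ (1/2:ℝ) + b := by rw [habs, hbdef]
        have hDpos : (0:ℝ) < ‖u‖ * ‖u - c‖ := mul_pos hunorm hucn
        have hfle : ‖(1 : ℂ) / (u * (w - a))‖ ≤
            (‖u‖ ^ (1/2:ℝ) + b) / (‖u‖ * ‖u - c‖) := by
          rw [hfeq, norm_div, norm_mul]
          exact (div_le_div_iff_of_pos_right hDpos).mpr hnum
        have hx0 : (0:ℝ) ≤ ‖u‖ ^ (1/2:ℝ) := Real.rpow_nonneg hunorm.le _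
        have e2 : (‖u‖ ^ (1/2:ℝ)) ^ p * ‖u‖ ^ (-p) = ‖u‖ ^ (-(p/2)) := by
          rw [← Real.rpow_mul (norm_nonneg u), ← Real.rpow_add hunorm]
          congr 1
          ring
        calc ‖(1 : ℂ) / (u * (w - a))‖ ^ p
            ≤ ((‖u‖ ^ (1/2:ℝ) + b) / (‖u‖ * ‖u - c‖)) ^ p :=
              Real.rpow_le_rpow (norm_nonneg _) hfle (by linarith)
          _ = (‖u‖ ^ (1/2:ℝ) + b) ^ p * ((‖u‖ * ‖u - c‖) ^ p)⁻¹ := by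
              rw [div_eq_mul_inv, Real.mul_rpow (by positivity) (by positivity),
                Real.inv_rpow hDpos.le]
          _ ≤ (2 ^ p * ((‖u‖ ^ (1/2:ℝ)) ^ p + b ^ p)) * ((‖u‖ * ‖u - c‖) ^ p)⁻¹ := by
              apply mul_le_mul_of_nonneg_right (add_rpow_le' hx0 hb.le (by linarith))
              positivity
          _ = 2 ^ p * (‖u‖ ^ (-(p/2)) * ‖u - c‖ ^ (-p)
                + b ^ p * (‖u‖ ^ (-p) * ‖u - c‖ ^ (-p))) := by
              rw [← Real.rpow_neg hDpos.le, Real.mul_rpow hunorm.le hucn.le]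
              rw [show (-p:ℝ) = -p from rfl]
              have e3 : (‖u‖ * ‖u - c‖) ^ (-p) = ‖u‖ ^ (-p) * ‖u - c‖ ^ (-p) :=
                Real.mul_rpow hunorm.le hucn.le
              linear_combination (‖u - c‖ ^ (-p) * (2:ℝ) ^ p) * e2
    have hmeas1 : Measurable fun u : ℂ =>
        ENNReal.ofReal (‖u‖ ^ (-(p/2)) * ‖u - c‖ ^ (-p)) := by fun_prop
    have hac : ∀ᵐ u ∂(volume.restrict (Metric.ball (0:ℂ) R)), u ≠ c := by
      apply ae_iff.mpr
      have hset : {u : ℂ | ¬ u ≠ c} = {c} := by ext u; simp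
      rw [hset]
      exact le_antisymm (le_trans (Measure.restrict_le_self _) (by simp)) (by simp)
    have hbp0 : (0:ℝ) ≤ b ^ p := Real.rpow_nonneg hb.le _
    have h2p0 : (0:ℝ) ≤ (2:ℝ) ^ p := Real.rpow_nonneg (by norm_num) _
    calc (∫⁻ u in Metric.ball (0:ℂ) R,
            ENNReal.ofReal (‖(1 : ℂ) / (u * (u ^ (1/2 : ℂ) - a))‖ ^ p))
        ≤ ∫⁻ u in Metric.ball (0:ℂ) R, ENNReal.ofReal ((2:ℝ)^p) *
            (ENNReal.ofReal (‖u‖ ^ (-(p/2)) * ‖u - c‖ ^ (-p)) +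
              ENNReal.ofReal (b ^ p) * ENNReal.ofReal (‖u‖ ^ (-p) * ‖u - c‖ ^ (-p))) := by
          apply lintegral_mono_ae
          filter_upwards [hac] with u huc
          rw [← ENNReal.ofReal_mul hbp0, ← ENNReal.ofReal_add (by positivity) (by positivity),
            ← ENNReal.ofReal_mul h2p0]
          exact ENNReal.ofReal_le_ofReal (hpt u huc)
      _ = ENNReal.ofReal ((2:ℝ)^p) *
            ((∫⁻ u in Metric.ball (0:ℂ) R, ENNReal.ofReal (‖u‖ ^ (-(p/2)) * ‖u - c‖ ^ (-p))) +
             ENNReal.ofReal (b ^ p) *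
              ∫⁻ u in Metric.ball (0:ℂ) R, ENNReal.ofReal (‖u‖ ^ (-p) * ‖u - c‖ ^ (-p))) := by
          rw [lintegral_const_mul' _ _ ENNReal.ofReal_ne_top,
            lintegral_add_left hmeas1,
            lintegral_const_mul' _ _ ENNReal.ofReal_ne_top]
      _ ≤ ENNReal.ofReal ((2:ℝ)^p) *
            (ENNReal.ofReal (K₁ * (‖c‖ ^ (2 - p/2 - p) + ‖c‖ ^ (-(p - 1)))) +
             ENNReal.ofReal (b ^ p) *
              ENNReal.ofReal (K₂ * (‖c‖ ^ (2 - p - p) + ‖c‖ ^ (-(3*p/2 - 1))))) := by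
          gcongr
          · exact hP₁ c hc
          · exact hP₂ c hc
      _ ≤ ENNReal.ofReal ((C₂ + D₁ + 1) * (1 + b ^ t)) := by
          rw [← ENNReal.ofReal_mul hbp0, ← ENNReal.ofReal_add (by positivity) (by positivity),
            ← ENNReal.ofReal_mul h2p0]
          apply ENNReal.ofReal_le_ofReal
          -- real arithmetic
          have hm1 : ‖c‖ ^ (2 - p/2 - p) = b ^ (4 - 3*p) := by
            rw [hmb, ← Real.rpow_natCast b 2, ← Real.rpow_mul hb.le]
            congr 1
            push_cast
            ring
          have hm2 : ‖c‖ ^ (-(p - 1)) = b ^ (2 - 2*p) := by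
            rw [hmb, ← Real.rpow_natCast b 2, ← Real.rpow_mul hb.le]
            congr 1
            push_cast
            ring
          have hm3 : ‖c‖ ^ (2 - p - p) = b ^ (4 - 4*p) := by
            rw [hmb, ← Real.rpow_natCast b 2, ← Real.rpow_mul hb.le]
            congr 1
            push_cast
            ring
          have hm4 : ‖c‖ ^ (-(3*p/2 - 1)) = b ^ (2 - 3*p) := by
            rw [hmb, ← Real.rpow_natCast b 2, ← Real.rpow_mul hb.le]
            congr 1
            push_cast
            ring
          have hbp1 : b ^ p * b ^ (4 - 4*p) = b ^ (4 - 3*p) := by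
            rw [← Real.rpow_add hb]; congr 1; ring
          have hbp2 : b ^ p * b ^ (2 - 3*p) = b ^ (2 - 2*p) := by
            rw [← Real.rpow_add hb]; congr 1; ring
          rw [hm1, hm2, hm3, hm4]
          have hswap : b ^ p * (K₂ * (b ^ (4 - 4*p) + b ^ (2 - 3*p)))
              = K₂ * (b ^ (4 - 3*p) + b ^ (2 - 2*p)) := by
            rw [← hbp1, ← hbp2]; ring
          rw [hswap]
          have he1 : b ^ (4 - 3*p) ≤ B₀ ^ (4 - 3*p - t) * b ^ t :=
            rpow_le_shift hb hcase ht4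
          have he2 : b ^ (2 - 2*p) ≤ B₀ ^ (2 - 2*p - t) * b ^ t :=
            rpow_le_shift hb hcase ht2
          have hS : b ^ (4 - 3*p) + b ^ (2 - 2*p)
              ≤ (B₀ ^ (4 - 3*p - t) + B₀ ^ (2 - 2*p - t)) * b ^ t := by
            calc b ^ (4 - 3*p) + b ^ (2 - 2*p)
                ≤ B₀ ^ (4 - 3*p - t) * b ^ t + B₀ ^ (2 - 2*p - t) * b ^ t :=
                  add_le_add he1 he2
              _ = (B₀ ^ (4 - 3*p - t) + B₀ ^ (2 - 2*p - t)) * b ^ t := by ring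
          have hmain : 2 ^ p * ((K₁ + K₂) * (b ^ (4 - 3*p) + b ^ (2 - 2*p))) ≤ C₂ * b ^ t := by
            rw [hC₂def, mul_assoc, mul_assoc]
            apply mul_le_mul_of_nonneg_left _ h2p0
            rw [← mul_assoc]
            calc (K₁ + K₂) * (b ^ (4 - 3*p) + b ^ (2 - 2*p))
                ≤ (K₁ + K₂) * ((B₀ ^ (4 - 3*p - t) + B₀ ^ (2 - 2*p - t)) * b ^ t) :=
                  mul_le_mul_of_nonneg_left hS (by positivity)
              _ = (K₁ + K₂) * (B₀ ^ (4 - 3*p - t) + B₀ ^ (2 - 2*p - t)) * b ^ t := by ring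
          nlinarith [hbt, hC₂, hD₁]
  · push_neg at hcase
    have hpt : ∀ u ∈ Metric.ball (0:ℂ) R,
        ENNReal.ofReal (‖(1:ℂ)/(u * (u ^ (1/2:ℂ) - a))‖ ^ p) ≤
          ENNReal.ofReal (((Real.sqrt R)⁻¹) ^ p) * ENNReal.ofReal (‖u‖ ^ (-p)) := by
      intro u hu
      rw [← ENNReal.ofReal_mul (by positivity)]
      apply ENNReal.ofReal_le_ofReal
      rcases eq_or_ne u 0 with rfl | hu0
      · have h0 : ((0:ℂ) * ((0:ℂ) ^ (1/2:ℂ) - a)) = 0 := zero_mul _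
        rw [h0, div_zero, norm_zero, Real.zero_rpow (by positivity : (0:ℝ) < p).ne']
        positivity
      · have hunorm : (0:ℝ) < ‖u‖ := norm_pos_iff.mpr hu0
        set w : ℂ := u ^ (1/2:ℂ) with hwdef
        have habs : ‖w‖ = ‖u‖ ^ (1/2:ℝ) := cpow_half_norm hu0
        have hwR : ‖w‖ < Real.sqrt R := by
          rw [habs, Real.sqrt_eq_rpow]
          exact Real.rpow_lt_rpow (norm_nonneg u) (mem_ball_zero_iff.mp hu) (by norm_num)
        have hwb : Real.sqrt R ≤ ‖w - a‖ := by
          have h1 : ‖a‖ - ‖w‖ ≤ ‖a - w‖ := norm_sub_norm_le a w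
          have h2 : ‖a - w‖ = ‖w - a‖ := norm_sub_rev a w
          have h3 : 2 * Real.sqrt R < b := by rw [← hB₀def]; exact hcase
          rw [← hbdef] at h1
          linarith
        have hfn : ‖(1:ℂ)/(u * (w - a))‖ = 1/(‖u‖ * ‖w - a‖) := by
          rw [norm_div, norm_one, norm_mul]
        have hd : 1/(‖u‖ * ‖w - a‖) ≤ (Real.sqrt R)⁻¹ * ‖u‖⁻¹ := by
          rw [show ((Real.sqrt R)⁻¹ * ‖u‖⁻¹ : ℝ) = 1/(‖u‖ * Real.sqrt R) by
            rw [one_div, mul_inv]; ring]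
          apply one_div_le_one_div_of_le (by positivity)
          exact mul_le_mul_of_nonneg_left hwb hunorm.le
        calc ‖(1:ℂ)/(u * (w - a))‖ ^ p ≤ ((Real.sqrt R)⁻¹ * ‖u‖⁻¹) ^ p := by
              apply Real.rpow_le_rpow (norm_nonneg _) _ (by linarith)
              rw [hfn]; exact hd
          _ = ((Real.sqrt R)⁻¹) ^ p * ‖u‖ ^ (-p) := by
              rw [Real.mul_rpow (by positivity) (by positivity), Real.inv_rpow hunorm.le,
                ← Real.rpow_neg hunorm.le]
    calc (∫⁻ u in Metric.ball (0:ℂ) R,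
            ENNReal.ofReal (‖(1 : ℂ) / (u * (u ^ (1/2 : ℂ) - a))‖ ^ p))
        ≤ ∫⁻ u in Metric.ball (0:ℂ) R,
            ENNReal.ofReal (((Real.sqrt R)⁻¹) ^ p) * ENNReal.ofReal (‖u‖ ^ (-p)) := by
          apply lintegral_mono_ae
          filter_upwards [ae_restrict_mem measurableSet_ball] with u hu
          exact hpt u hu
      _ = ENNReal.ofReal (((Real.sqrt R)⁻¹) ^ p) *
            ∫⁻ u in Metric.ball (0:ℂ) R, ENNReal.ofReal (‖u‖ ^ (-p)) :=
          lintegral_const_mul' _ _ ENNReal.ofReal_ne_top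
      _ ≤ ENNReal.ofReal (((Real.sqrt R)⁻¹) ^ p) * ENNReal.ofReal (Kr * R ^ (2 - p)) := by
          gcongr
          exact hPr R hR
      _ ≤ ENNReal.ofReal ((C₂ + D₁ + 1) * (1 + b ^ t)) := by
          rw [← ENNReal.ofReal_mul (by positivity)]
          apply ENNReal.ofReal_le_ofReal
          rw [← hD₁def]
          nlinarith [hbt, hC₂, hD₁]

/-- For every `p` with `1 ≤ p < 2` there exists `δ = δ(p) > 0` such that
for every `R > 0` there is a constant `C = C(p,R) > 0` with: for every `a ∈ ℂ`, `a ≠ 0`,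
the `L^p` norm of `u ↦ 1/(u(√u − a))` over the disk `{|u| < R}` (planar Lebesgue measure)
is at most `C (1 + |a|^{-1+δ})`.  Here `√u = u^(1/2)` is the principal branch. -/
theorem lemma_2210A_general :
    ∀ p : ℝ, 1 ≤ p → p < 2 →
      ∃ δ : ℝ, 0 < δ ∧
        ∀ R : ℝ, 0 < R →
          ∃ C : ℝ, 0 < C ∧
            ∀ a : ℂ, a ≠ 0 →
              eLpNorm (fun u : ℂ => 1 / (u * (u ^ (1/2 : ℂ) - a)))
                  (ENNReal.ofReal p) (volume.restrict {u : ℂ | ‖u‖ < R})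
                ≤ ENNReal.ofReal (C * (1 + ‖a‖ ^ (-1 + δ))) := by
  intro p hp1 hp2
  refine ⟨(2 - p)/2, by linarith, fun R hR => ?_⟩
  obtain ⟨C₀, hC₀, hbound⟩ := main_lintegral hp1 hp2 hR
  refine ⟨max 1 (2*C₀), lt_of_lt_of_le one_pos (le_max_left _ _), fun a ha => ?_⟩
  have hC1 : (1:ℝ) ≤ max 1 (2*C₀) := le_max_left _ _
  have hC2 : 2*C₀ ≤ max 1 (2*C₀) := le_max_right _ _
  set C : ℝ := max 1 (2*C₀) with hCdef
  have hb : (0:ℝ) < ‖a‖ := norm_pos_iff.mpr ha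
  have hset : {u : ℂ | ‖u‖ < R} = Metric.ball (0:ℂ) R := by
    ext u
    simp [Metric.mem_ball, Complex.dist_eq]
  rw [hset]
  set y : ℝ := ‖a‖ ^ (-1 + (2-p)/2) with hydef
  have hy : 0 ≤ y := Real.rpow_nonneg hb.le _
  have hX : (0:ℝ) < C * (1 + y) := by nlinarith
  have hp0 : (ENNReal.ofReal p) ≠ 0 := by
    simp only [ne_eq, ENNReal.ofReal_eq_zero, not_le]
    linarith
  rw [eLpNorm_eq_lintegral_rpow_enorm_toReal hp0 ENNReal.ofReal_ne_top,
    ENNReal.toReal_ofReal (by linarith : (0:ℝ) ≤ p)]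
  have hrw : (∫⁻ u in Metric.ball (0:ℂ) R,
        ‖(fun u : ℂ => 1/(u*(u^(1/2:ℂ) - a))) u‖ₑ ^ p)
      = ∫⁻ u in Metric.ball (0:ℂ) R,
        ENNReal.ofReal (‖(1:ℂ)/(u*(u^(1/2:ℂ) - a))‖ ^ p) := by
    apply lintegral_congr
    intro u
    rw [← ofReal_norm,
      ← ENNReal.ofReal_rpow_of_nonneg (norm_nonneg _) (by linarith : (0:ℝ) ≤ p)]
  rw [hrw]
  have hple : (∫⁻ u in Metric.ball (0:ℂ) R,
      ENNReal.ofReal (‖(1:ℂ)/(u*(u^(1/2:ℂ) - a))‖ ^ p)) ≤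
      ENNReal.ofReal ((C * (1 + y)) ^ p) := by
    refine le_trans (hbound a ha) (ENNReal.ofReal_le_ofReal ?_)
    have hyp : ‖a‖ ^ ((-1 + (2-p)/2) * p) = y ^ p := by
      rw [hydef]
      exact Real.rpow_mul hb.le _ _
    rw [hyp]
    have hyp0 : (0:ℝ) ≤ (1+y) ^ p := Real.rpow_nonneg (by linarith) _
    have hA1 : (1:ℝ) ≤ (1+y)^p := by
      calc (1:ℝ) = 1 ^ p := (Real.one_rpow p).symm
        _ ≤ (1+y)^p := Real.rpow_le_rpow (by norm_num) (by linarith) (by linarith)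
    have hA2 : y^p ≤ (1+y)^p := Real.rpow_le_rpow hy (by linarith) (by linarith)
    have hA3 : C ≤ C^p := by
      calc C = C^(1:ℝ) := (Real.rpow_one C).symm
        _ ≤ C^p := Real.rpow_le_rpow_of_exponent_le hC1 hp1
    have hXp : (C*(1+y))^p = C^p * (1+y)^p :=
      Real.mul_rpow (by linarith) (by linarith)
    rw [hXp]
    have h5 : C₀ * 1 ≤ C₀ * (1+y)^p := by nlinarith
    have h6 : C₀ * y^p ≤ C₀ * (1+y)^p := by nlinarith
    have h7 : 2*C₀*(1+y)^p ≤ C*(1+y)^p := by nlinarith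
    have h8 : C*(1+y)^p ≤ C^p*(1+y)^p := by nlinarith
    nlinarith
  calc (∫⁻ u in Metric.ball (0:ℂ) R,
        ENNReal.ofReal (‖(1:ℂ)/(u*(u^(1/2:ℂ) - a))‖ ^ p)) ^ (1/p)
      ≤ (ENNReal.ofReal ((C * (1 + y)) ^ p)) ^ (1/p) :=
        ENNReal.rpow_le_rpow hple (by positivity)
    _ = ENNReal.ofReal (C * (1 + y)) := by
        rw [← ENNReal.ofReal_rpow_of_pos hX, ← ENNReal.rpow_mul,
          mul_one_div_cancel (by linarith : p ≠ 0), ENNReal.rpow_one]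
end

section
/- For p = 4/3 and every R > 0 there is a constant C = C(R) > 0 such that for every a ∈ ℂ with a ≠ 0, ‖u ↦ 1/(u(√u − a))‖_{L^{4/3}({u ∈ ℂ : |u| < R})} ≤ C(1 + |ln |a||^{3/4}). -/
open MeasureTheory Complex Metric Set
open scoped ENNReal NNReal

namespace L2210

noncomputable section

def V : ℝ≥0∞ := volume (Metric.ball (0:ℂ) 1)

lemma V_ne_top : V ≠ ⊤ := measure_ball_lt_top.ne

lemma V_pos : 0 < V := measure_ball_pos _ _ one_pos

lemma vol_closedBall (c : ℂ) {r : ℝ} (hr : 0 ≤ r) :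
    volume (closedBall c r) = ENNReal.ofReal (r ^ 2) * V := by
  rw [Measure.addHaar_closedBall volume c hr, Complex.finrank_real_complex]; rfl

lemma vol_ball (c : ℂ) {r : ℝ} (hr : 0 ≤ r) :
    volume (ball c r) = ENNReal.ofReal (r ^ 2) * V := by
  rw [Measure.addHaar_ball volume c hr, Complex.finrank_real_complex]; rfl

lemma exists_dyadic_down {m d : ℝ} (hd0 : 0 < d) (hdm : d ≤ m) :
    ∃ k : ℕ, m / 2 ^ (k+1) < d ∧ d ≤ m / 2 ^ k := by
  classical
  have hex : ∃ n : ℕ, m / 2 ^ n < d := by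
    obtain ⟨n, hn⟩ := pow_unbounded_of_one_lt (m / d) (one_lt_two (α := ℝ))
    exact ⟨n, by rwa [div_lt_iff₀ (by positivity), ← div_lt_iff₀' hd0]⟩
  have hP : m / 2 ^ (Nat.find hex) < d := Nat.find_spec hex
  have hn0 : Nat.find hex ≠ 0 := by
    intro h
    rw [h] at hP
    simp only [pow_zero, div_one] at hP
    exact absurd hdm (not_le.2 hP)
  obtain ⟨k, hk⟩ := Nat.exists_eq_succ_of_ne_zero hn0
  rw [hk] at hP
  refine ⟨k, hP, ?_⟩
  have := Nat.find_min hex (m := k) (by omega)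
  exact not_lt.1 this

lemma two_rpow_neg_two : (2:ℝ) ^ (-2:ℝ) = 1/4 := by
  rw [show ((-2:ℝ)) = ((-2 : ℤ) : ℝ) by norm_num, Real.rpow_intCast]
  norm_num

lemma real_calc {p m : ℝ} (hm : 0 < m) (k : ℕ) :
    (m / 2 ^ (k+1)) ^ (-p) * (m / 2 ^ k) ^ 2 =
      (m ^ (2 - p) * 2 ^ p) * ((2:ℝ) ^ (p - 2)) ^ k := by
  have h2k : (0:ℝ) < 2 ^ k := by positivity
  have h2k1 : (0:ℝ) < 2 ^ (k+1) := by positivity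
  have e1 : (m / 2 ^ (k+1) : ℝ) ^ (-p) = m ^ (-p) * ((2:ℝ) ^ (k+1)) ^ (p:ℝ) := by
    rw [Real.div_rpow hm.le h2k1.le, Real.rpow_neg hm.le, Real.rpow_neg h2k1.le,
      div_eq_mul_inv, inv_inv]
  have e2 : ((2:ℝ) ^ (k+1)) ^ (p:ℝ) = 2 ^ p * ((2:ℝ) ^ p) ^ k := by
    rw [pow_succ, mul_comm ((2:ℝ)^k) 2, Real.mul_rpow (by norm_num) h2k.le,
      ← Real.rpow_natCast (2:ℝ) k, ← Real.rpow_mul (by norm_num),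
      mul_comm (k:ℝ) p, Real.rpow_mul (by norm_num), Real.rpow_natCast]
  have e3 : (m / 2 ^ k : ℝ) ^ 2 = m ^ 2 * ((1:ℝ)/4) ^ k := by
    rw [div_pow, show ((2:ℝ)^k)^2 = 4^k by rw [← pow_mul, mul_comm, pow_mul]; norm_num,
      div_eq_mul_inv, ← inv_pow, one_div]
  have e4 : m ^ (-p) * m ^ 2 = m ^ (2 - p) := by
    rw [← Real.rpow_natCast m 2, ← Real.rpow_add hm]
    norm_num
    ring_nf
  have e5 : ((2:ℝ) ^ p) ^ k * ((1:ℝ)/4) ^ k = ((2:ℝ) ^ (p-2)) ^ k := by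
    rw [← mul_pow]
    congr 1
    rw [Real.rpow_sub (by norm_num),
      show (2:ℝ) ^ (2:ℝ) = 4 by rw [Real.rpow_two]; norm_num]
    ring
  rw [e1, e2, e3]
  calc m ^ (-p) * (2 ^ p * ((2:ℝ) ^ p) ^ k) * (m ^ 2 * ((1:ℝ)/4) ^ k)
      = (m ^ (-p) * m ^ 2) * 2 ^ p * (((2:ℝ) ^ p) ^ k * ((1:ℝ)/4) ^ k) := by ring
    _ = (m ^ (2 - p) * 2 ^ p) * ((2:ℝ) ^ (p - 2)) ^ k := by rw [e4, e5]


lemma rpow_neg_le {x : ℝ≥0∞} {r : ℝ} (hr : 0 ≤ r) {b : ℝ} (hb : 0 < b)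
    (h : ENNReal.ofReal b ≤ x) : x ^ (-r) ≤ ENNReal.ofReal (b ^ (-r)) := by
  rw [← ENNReal.ofReal_rpow_of_pos hb, ENNReal.rpow_neg, ENNReal.rpow_neg]
  exact ENNReal.inv_le_inv.2 (ENNReal.rpow_le_rpow h hr)

lemma lemA {p : ℝ} (hp0 : 0 < p) (hp2 : p < 2) (c : ℂ) {m : ℝ} (hm : 0 < m) :
    (∫⁻ w in closedBall c m, ((‖w - c‖₊ : ℝ≥0∞)) ^ (-p)) ≤
      ENNReal.ofReal (m ^ (2 - p) * 2 ^ p) *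
        ((1 - ENNReal.ofReal (2 ^ (p - 2)))⁻¹ * V) := by
  set f : ℂ → ℝ≥0∞ := fun w => ((‖w - c‖₊ : ℝ≥0∞)) ^ (-p) with hf
  set A : ℕ → Set ℂ := fun k => {w | m / 2 ^ (k+1) < ‖w - c‖ ∧ ‖w - c‖ ≤ m / 2 ^ k} with hA
  have hcover : closedBall c m ⊆ {c} ∪ ⋃ k, A k := by
    intro w hw
    rcases eq_or_ne w c with rfl | hne
    · exact Or.inl rfl
    · have hd0 : 0 < ‖w - c‖ := norm_pos_iff.2 (sub_ne_zero.2 hne)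
      have hdm : ‖w - c‖ ≤ m := by rwa [mem_closedBall, dist_eq_norm] at hw
      obtain ⟨k, h1, h2⟩ := exists_dyadic_down hd0 hdm
      exact Or.inr (mem_iUnion.2 ⟨k, h1, h2⟩)
  have hsing : (∫⁻ w in ({c} : Set ℂ), f w) = 0 := by
    rw [Measure.restrict_singleton, measure_singleton, zero_smul, lintegral_zero_measure]
  have hAk : ∀ k : ℕ, (∫⁻ w in A k, f w) ≤
      ENNReal.ofReal ((m / 2 ^ (k+1)) ^ (-p) * (m / 2 ^ k) ^ 2) * V := by
    intro k
    have hb1 : (0:ℝ) < m / 2 ^ (k+1) := by positivity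
    have hb2 : (0:ℝ) ≤ m / 2 ^ k := by positivity
    calc (∫⁻ w in A k, f w)
        ≤ ∫⁻ _ in A k, ENNReal.ofReal ((m / 2 ^ (k+1)) ^ (-p)) := by
          refine setLIntegral_mono measurable_const fun w hw => ?_
          refine rpow_neg_le hp0.le hb1 ?_
          rw [← enorm_eq_nnnorm, ← ofReal_norm]
          exact ENNReal.ofReal_le_ofReal hw.1.le
      _ = ENNReal.ofReal ((m / 2 ^ (k+1)) ^ (-p)) * volume (A k) := setLIntegral_const _ _
      _ ≤ ENNReal.ofReal ((m / 2 ^ (k+1)) ^ (-p)) * volume (closedBall c (m / 2 ^ k)) := by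
          gcongr
          intro w hw
          rw [mem_closedBall, dist_eq_norm]
          exact hw.2
      _ = ENNReal.ofReal ((m / 2 ^ (k+1)) ^ (-p) * (m / 2 ^ k) ^ 2) * V := by
          rw [vol_closedBall c hb2, ← mul_assoc,
            ← ENNReal.ofReal_mul (Real.rpow_pos_of_pos hb1 _).le]
  calc (∫⁻ w in closedBall c m, f w)
      ≤ ∫⁻ w in ({c} ∪ ⋃ k, A k : Set ℂ), f w := lintegral_mono_set hcover
    _ ≤ (∫⁻ w in ({c} : Set ℂ), f w) + ∫⁻ w in (⋃ k, A k), f w := lintegral_union_le _ _ _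
    _ ≤ 0 + ∑' k, ∫⁻ w in A k, f w := by
        rw [hsing]
        gcongr
        exact lintegral_iUnion_le _ _
    _ ≤ ∑' k, ENNReal.ofReal ((m / 2 ^ (k+1)) ^ (-p) * (m / 2 ^ k) ^ 2) * V := by
        rw [zero_add]
        exact ENNReal.tsum_le_tsum hAk
    _ = ∑' k, ENNReal.ofReal (m ^ (2 - p) * 2 ^ p) * (ENNReal.ofReal ((2:ℝ) ^ (p - 2))) ^ k * V := by
        congr 1
        funext k
        rw [real_calc hm k, ENNReal.ofReal_mul (by positivity), ENNReal.ofReal_pow (by positivity)]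
    _ = ENNReal.ofReal (m ^ (2 - p) * 2 ^ p) *
          ((∑' k, (ENNReal.ofReal ((2:ℝ) ^ (p - 2))) ^ k) * V) := by
        rw [ENNReal.tsum_mul_right, ENNReal.tsum_mul_left, mul_assoc]
    _ ≤ ENNReal.ofReal (m ^ (2 - p) * 2 ^ p) *
          ((1 - ENNReal.ofReal (2 ^ (p - 2)))⁻¹ * V) := by
        rw [ENNReal.tsum_geometric]


lemma lemB (N : ℕ) {ε ρ : ℝ} (hε : 0 < ε) (hN : ρ ≤ ε * 2 ^ N) :
    (∫⁻ w in {w : ℂ | ε ≤ ‖w‖ ∧ ‖w‖ < ρ}, ((‖w‖₊ : ℝ≥0∞)) ^ (-2:ℝ)) ≤ N * (4 * V) := by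
  classical
  set S : Set ℂ := {w : ℂ | ε ≤ ‖w‖ ∧ ‖w‖ < ρ} with hS
  set B : ℕ → Set ℂ := fun k => {w : ℂ | ε * 2 ^ k ≤ ‖w‖ ∧ ‖w‖ < ε * 2 ^ (k+1)} ∩ S with hB
  have hcover : S ⊆ ⋃ k, B k := by
    intro w hw
    set P : ℕ → Prop := fun k => ε * 2 ^ k ≤ ‖w‖ with hP
    have hP0 : P 0 := by simpa [hP] using hw.1
    have hk := Nat.findGreatest_spec (P := P) (Nat.zero_le N) hP0
    set k := Nat.findGreatest P N with hkdef
    have hkN : k < N := by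
      rcases lt_or_eq_of_le (Nat.findGreatest_le (P := P) N) with h | h
      · exact h
      · exfalso
        have : ε * 2 ^ N ≤ ‖w‖ := by rw [← h]; exact hk
        exact absurd (lt_of_lt_of_le hw.2 hN) (not_lt.2 this)
    have hupper : ‖w‖ < ε * 2 ^ (k+1) := by
      have := Nat.findGreatest_is_greatest (P := P) (n := N) (k := k+1) (by omega) (by omega)
      exact lt_of_not_ge this
    exact mem_iUnion.2 ⟨k, ⟨hk, hupper⟩, hw⟩
  have hBk : ∀ k : ℕ, (∫⁻ w in B k, ((‖w‖₊ : ℝ≥0∞)) ^ (-2:ℝ)) ≤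
      (if k < N then 4 * V else 0) := by
    intro k
    by_cases hkN : k < N
    · simp only [hkN, if_true]
      have hb1 : (0:ℝ) < ε * 2 ^ k := by positivity
      calc (∫⁻ w in B k, ((‖w‖₊ : ℝ≥0∞)) ^ (-2:ℝ))
          ≤ ∫⁻ _ in B k, ENNReal.ofReal ((ε * 2 ^ k) ^ (-2:ℝ)) := by
            refine setLIntegral_mono measurable_const fun w hw => ?_
            refine rpow_neg_le (by norm_num) hb1 ?_
            rw [← enorm_eq_nnnorm, ← ofReal_norm]
            exact ENNReal.ofReal_le_ofReal hw.1.1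
        _ = ENNReal.ofReal ((ε * 2 ^ k) ^ (-2:ℝ)) * volume (B k) := setLIntegral_const _ _
        _ ≤ ENNReal.ofReal ((ε * 2 ^ k) ^ (-2:ℝ)) * volume (ball (0:ℂ) (ε * 2 ^ (k+1))) := by
            gcongr
            intro w hw
            rw [mem_ball, dist_zero_right]
            exact hw.1.2
        _ = ENNReal.ofReal ((ε * 2 ^ k) ^ (-2:ℝ) * (ε * 2 ^ (k+1)) ^ 2) * V := by
            rw [vol_ball _ (by positivity), ← mul_assoc,
              ← ENNReal.ofReal_mul (Real.rpow_pos_of_pos hb1 _).le]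
        _ = 4 * V := by
            congr 1
            have : ((ε * 2 ^ k) ^ (-2:ℝ) * (ε * 2 ^ (k+1)) ^ 2) = 4 := by
              rw [show ((-2:ℝ)) = ((-2 : ℤ) : ℝ) by norm_num, Real.rpow_intCast,
                zpow_neg, zpow_two, pow_succ]
              field_simp
              ring
            rw [this]
            norm_num
    · simp only [hkN, if_false]
      have : B k = ∅ := by
        ext w
        simp only [hB, mem_inter_iff, mem_setOf_eq, mem_empty_iff_false, iff_false]
        rintro ⟨⟨h1, _⟩, _, h2⟩
        have hkge : (N:ℕ) ≤ k := by omega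
        have : ε * 2 ^ N ≤ ε * 2 ^ k := by
          gcongr <;> norm_num
        linarith [lt_of_lt_of_le h2 hN]
      rw [this]
      simp
  calc (∫⁻ w in S, ((‖w‖₊ : ℝ≥0∞)) ^ (-2:ℝ))
      ≤ ∫⁻ w in (⋃ k, B k), ((‖w‖₊ : ℝ≥0∞)) ^ (-2:ℝ) := lintegral_mono_set hcover
    _ ≤ ∑' k, ∫⁻ w in B k, ((‖w‖₊ : ℝ≥0∞)) ^ (-2:ℝ) := lintegral_iUnion_le _ _
    _ ≤ ∑' k, (if k < N then 4 * V else 0) := ENNReal.tsum_le_tsum hBk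
    _ = ∑ k ∈ Finset.range N, (4 * V) := by
        rw [tsum_eq_sum (s := Finset.range N)]
        · refine Finset.sum_congr rfl fun k hk => ?_
          rw [if_pos (Finset.mem_range.1 hk)]
        · intro k hk
          rw [if_neg (fun h => hk (Finset.mem_range.2 h))]
    _ = N * (4 * V) := by rw [Finset.sum_const, Finset.card_range, nsmul_eq_mul]


def Dmul (c : ℂ) : ℂ →L[ℝ] ℂ :=
  (ContinuousLinearMap.smulRight (1 : ℂ →L[ℂ] ℂ) c).restrictScalars ℝ

lemma hasFDerivAt_sq (w : ℂ) : HasFDerivAt (fun z : ℂ => z ^ 2) (Dmul (2 * w)) w := by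
  have h2 : HasDerivAt (fun z : ℂ => z ^ 2) (2 * w) w := by
    simpa using hasDerivAt_pow 2 w
  exact h2.hasFDerivAt.restrictScalars ℝ

lemma det_Dmul (c : ℂ) : (Dmul c).det = Complex.normSq c := by
  rw [show (Dmul c).det = LinearMap.det ((Dmul c) : ℂ →ₗ[ℝ] ℂ) from rfl,
    ← LinearMap.det_toMatrix Complex.basisOneI, Matrix.det_fin_two]
  simp [LinearMap.toMatrix_apply, Dmul, Complex.coe_basisOneI_repr, Complex.coe_basisOneI,
    Complex.normSq_apply, Complex.mul_re, Complex.mul_im]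

lemma injOn_sq : InjOn (fun w : ℂ => w ^ 2) {w : ℂ | 0 < w.re} := by
  intro x hx y hy h
  simp only [mem_setOf_eq] at hx hy h
  have h2 : (x - y) * (x + y) = 0 := by linear_combination h
  rcases mul_eq_zero.1 h2 with h | h
  · exact sub_eq_zero.1 h
  · exfalso
    have : (x + y).re = 0 := by rw [h]; simp
    rw [Complex.add_re] at this
    linarith

lemma re_sqrt_pos {u : ℂ} (hu : u ∈ Complex.slitPlane) : 0 < (u ^ (2⁻¹:ℂ)).re := by
  rw [Complex.cpow_inv_two_re]
  apply Real.sqrt_pos.2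
  have : -u.re < ‖u‖ := by
    rcases Complex.mem_slitPlane_iff.1 hu with h | h
    · have : (0:ℝ) ≤ ‖u‖ := norm_nonneg u
      linarith
    · have := Complex.abs_re_lt_norm.2 h
      have := abs_lt.1 this
      linarith [this.1]
  linarith

lemma abs_sqrt (u : ℂ) : ‖u ^ (2⁻¹:ℂ)‖ = Real.sqrt ‖u‖ := by
  have := Complex.norm_cpow_inv_nat u 2
  rw [show (((2:ℕ):ℂ))⁻¹ = (2⁻¹:ℂ) by norm_num] at this
  rw [this, Real.sqrt_eq_rpow]
  norm_num

lemma sq_sqrt' (u : ℂ) : (u ^ (2⁻¹:ℂ)) ^ 2 = u := by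
  have := Complex.cpow_nat_inv_pow u (n := 2) (by norm_num)
  rwa [show (((2:ℕ):ℂ))⁻¹ = (2⁻¹:ℂ) by norm_num] at this

lemma slit_null : volume {z : ℂ | z.re ≤ 0 ∧ z.im = 0} = 0 := by
  have hsub : {z : ℂ | z.re ≤ 0 ∧ z.im = 0} ⊆
      (Submodule.span ℝ {(1:ℂ)} : Submodule ℝ ℂ) := by
    rintro z ⟨_, him⟩
    rw [SetLike.mem_coe, Submodule.mem_span_singleton]
    refine ⟨z.re, ?_⟩
    apply Complex.ext <;> simp [Complex.real_smul, him]
  refine measure_mono_null hsub (Measure.addHaar_submodule _ _ ?_)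
  intro h
  have hI : (I : ℂ) ∈ Submodule.span ℝ {(1:ℂ)} := h ▸ Submodule.mem_top
  rw [Submodule.mem_span_singleton] at hI
  obtain ⟨r, hr⟩ := hI
  have := congrArg Complex.im hr
  simp [Complex.real_smul] at this

lemma compl_slitPlane : (Complex.slitPlane)ᶜ = {z : ℂ | z.re ≤ 0 ∧ z.im = 0} := by
  ext z
  simp [Complex.mem_slitPlane_iff, not_or, not_lt]

lemma subset_image {R : ℝ} :
    ball (0:ℂ) R ∩ Complex.slitPlane ⊆
      (fun w : ℂ => w ^ 2) '' ({w : ℂ | 0 < w.re} ∩ ball (0:ℂ) (Real.sqrt R)) := by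
  rintro u ⟨hu, hslit⟩
  refine ⟨u ^ (2⁻¹:ℂ), ⟨re_sqrt_pos hslit, ?_⟩, sq_sqrt' u⟩
  rw [mem_ball, dist_zero_right] at hu ⊢
  rw [abs_sqrt]
  exact Real.sqrt_lt_sqrt (norm_nonneg u) hu


lemma geom_inv_ne_top {r : ℝ} (hr : r < 1) : (1 - ENNReal.ofReal r)⁻¹ ≠ ⊤ := by
  rw [Ne, ENNReal.inv_eq_top]
  exact (tsub_pos_iff_lt.2 (ENNReal.ofReal_lt_one.2 hr)).ne'

set_option maxHeartbeats 1000000 in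
lemma main_est {ρ : ℝ} (hρ : 0 < ρ) :
    ∃ K : ℝ, 0 < K ∧ ∀ a : ℂ, a ≠ 0 →
    (∫⁻ w in ball (0:ℂ) ρ,
        ((‖w‖₊:ℝ≥0∞)) ^ (-(2/3):ℝ) * ((‖w - a‖₊:ℝ≥0∞)) ^ (-(4/3):ℝ))
      ≤ ENNReal.ofReal (K * (1 + |Real.log ‖a‖|)) := by
  classical
  set E1 : ℝ≥0∞ := ENNReal.ofReal ((2:ℝ) ^ ((2:ℝ)/3)) *
    ((1 - ENNReal.ofReal ((2:ℝ) ^ (2/3 - 2 : ℝ)))⁻¹ * V) with hE1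
  set E2 : ℝ≥0∞ := ENNReal.ofReal ((6:ℝ) ^ ((2:ℝ)/3) * (2:ℝ) ^ ((4:ℝ)/3)) *
    ((1 - ENNReal.ofReal ((2:ℝ) ^ (4/3 - 2 : ℝ)))⁻¹ * V) with hE2
  have hE1top : E1 ≠ ⊤ := by
    apply ENNReal.mul_ne_top ENNReal.ofReal_ne_top
    exact ENNReal.mul_ne_top
      (geom_inv_ne_top (Real.rpow_lt_one_of_one_lt_of_neg one_lt_two (by norm_num))) V_ne_top
  have hE2top : E2 ≠ ⊤ := by
    apply ENNReal.mul_ne_top ENNReal.ofReal_ne_top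
    exact ENNReal.mul_ne_top
      (geom_inv_ne_top (Real.rpow_lt_one_of_one_lt_of_neg one_lt_two (by norm_num))) V_ne_top
  set W : ℝ := (4 * V).toReal with hW
  have hWnn : 0 ≤ W := ENNReal.toReal_nonneg
  have h4V : 4 * V = ENNReal.ofReal W := by
    rw [hW, ENNReal.ofReal_toReal]
    exact ENNReal.mul_ne_top (by norm_num) V_ne_top
  set Kρ : ℝ := 2*|Real.log ρ| + 2*Real.log 2 + 3 with hKρ
  have hlog2 : (0.6931471803:ℝ) < Real.log 2 := Real.log_two_gt_d9
  have hKρpos : 0 < Kρ := by positivity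
  set c3 : ℝ := 2^((4:ℝ)/3) * W * Kρ with hc3
  have hc3nn : 0 ≤ c3 := by positivity
  refine ⟨(E1 + E2).toReal + c3 + 1, by positivity, fun a ha => ?_⟩
  set t : ℝ := ‖a‖ with hta
  have ht : 0 < t := norm_pos_iff.2 ha
  set x : ℝ := |Real.log t| with hx
  have hxnn : 0 ≤ x := abs_nonneg _
  set F : ℂ → ℝ≥0∞ := fun w =>
    ((‖w‖₊:ℝ≥0∞)) ^ (-(2/3):ℝ) * ((‖w - a‖₊:ℝ≥0∞)) ^ (-(4/3):ℝ) with hF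
  set P1 : Set ℂ := closedBall (0:ℂ) (t/2) with hP1
  set P2 : Set ℂ := {w : ℂ | t/2 < ‖w‖ ∧ ‖w‖ ≤ 2*t} with hP2
  set P3 : Set ℂ := {w : ℂ | 2*t < ‖w‖ ∧ ‖w‖ < ρ} with hP3
  have mP2 : MeasurableSet P2 :=
    (measurableSet_lt measurable_const measurable_norm).inter
      (measurableSet_le measurable_norm measurable_const)
  have mP3 : MeasurableSet P3 :=
    (measurableSet_lt measurable_const measurable_norm).inter
      (measurableSet_lt measurable_norm measurable_const)
  have hcover : ball (0:ℂ) ρ ⊆ P1 ∪ P2 ∪ P3 := by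
    intro w hw
    rw [mem_ball, dist_zero_right] at hw
    rcases le_or_gt ‖w‖ (t/2) with h1 | h1
    · exact Or.inl (Or.inl (by rwa [hP1, mem_closedBall, dist_zero_right]))
    · rcases le_or_gt ‖w‖ (2*t) with h2 | h2
      · exact Or.inl (Or.inr ⟨h1, h2⟩)
      · exact Or.inr ⟨h2, hw⟩
  -- P1 estimate
  have ht2 : 0 < t/2 := by linarith
  have I1 : (∫⁻ w in P1, F w) ≤ E1 := by
    have hpt1 : ∀ w ∈ P1, F w ≤
        ENNReal.ofReal ((t/2) ^ (-(4/3):ℝ)) * ((‖w‖₊:ℝ≥0∞)) ^ (-(2/3):ℝ) := by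
      intro w hw
      rw [hP1, mem_closedBall, dist_zero_right] at hw
      have hd : t/2 ≤ ‖w - a‖ := by
        have h1 : ‖a‖ - ‖w‖ ≤ ‖a - w‖ := norm_sub_norm_le a w
        rw [norm_sub_rev] at h1
        linarith
      have h2 : ((‖w - a‖₊:ℝ≥0∞)) ^ (-(4/3):ℝ) ≤ ENNReal.ofReal ((t/2) ^ (-(4/3):ℝ)) := by
        refine rpow_neg_le (by norm_num) ht2 ?_
        rw [← enorm_eq_nnnorm, ← ofReal_norm]
        exact ENNReal.ofReal_le_ofReal hd
      calc F w ≤ ((‖w‖₊:ℝ≥0∞)) ^ (-(2/3):ℝ) * ENNReal.ofReal ((t/2) ^ (-(4/3):ℝ)) :=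
            mul_le_mul_right h2 _
        _ = _ := mul_comm _ _
    calc (∫⁻ w in P1, F w)
        ≤ ∫⁻ w in P1, ENNReal.ofReal ((t/2) ^ (-(4/3):ℝ)) * ((‖w‖₊:ℝ≥0∞)) ^ (-(2/3):ℝ) :=
          setLIntegral_mono' measurableSet_closedBall hpt1
      _ = ENNReal.ofReal ((t/2) ^ (-(4/3):ℝ)) * ∫⁻ w in P1, ((‖w‖₊:ℝ≥0∞)) ^ (-(2/3):ℝ) :=
          lintegral_const_mul' _ _ ENNReal.ofReal_ne_top
      _ ≤ ENNReal.ofReal ((t/2) ^ (-(4/3):ℝ)) *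
            (ENNReal.ofReal ((t/2) ^ (2 - 2/3 : ℝ) * 2 ^ (2/3 : ℝ)) *
              ((1 - ENNReal.ofReal ((2:ℝ) ^ (2/3 - 2 : ℝ)))⁻¹ * V)) := by
          gcongr
          have h := lemA (p := 2/3) (by norm_num) (by norm_num) (0:ℂ) ht2
          simpa using h
      _ = E1 := by
          rw [hE1, ← mul_assoc, ← ENNReal.ofReal_mul (Real.rpow_pos_of_pos ht2 _).le]
          congr 2
          rw [← mul_assoc, ← Real.rpow_add ht2,
            show (-(4/3) + (2 - 2/3) : ℝ) = 0 by norm_num, Real.rpow_zero, one_mul]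
  -- P2 estimate
  have h3t : 0 < 3*t := by linarith
  have I2 : (∫⁻ w in P2, F w) ≤ E2 := by
    have hpt2 : ∀ w ∈ P2, F w ≤
        ENNReal.ofReal ((t/2) ^ (-(2/3):ℝ)) * ((‖w - a‖₊:ℝ≥0∞)) ^ (-(4/3):ℝ) := by
      intro w hw
      have h2 : ((‖w‖₊:ℝ≥0∞)) ^ (-(2/3):ℝ) ≤ ENNReal.ofReal ((t/2) ^ (-(2/3):ℝ)) := by
        refine rpow_neg_le (by norm_num) ht2 ?_
        rw [← enorm_eq_nnnorm, ← ofReal_norm]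
        exact ENNReal.ofReal_le_ofReal hw.1.le
      exact mul_le_mul_left h2 _
    calc (∫⁻ w in P2, F w)
        ≤ ∫⁻ w in P2, ENNReal.ofReal ((t/2) ^ (-(2/3):ℝ)) * ((‖w - a‖₊:ℝ≥0∞)) ^ (-(4/3):ℝ) :=
          setLIntegral_mono' mP2 hpt2
      _ = ENNReal.ofReal ((t/2) ^ (-(2/3):ℝ)) * ∫⁻ w in P2, ((‖w - a‖₊:ℝ≥0∞)) ^ (-(4/3):ℝ) :=
          lintegral_const_mul' _ _ ENNReal.ofReal_ne_top
      _ ≤ ENNReal.ofReal ((t/2) ^ (-(2/3):ℝ)) *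
            ∫⁻ w in closedBall a (3*t), ((‖w - a‖₊:ℝ≥0∞)) ^ (-(4/3):ℝ) := by
          gcongr
          intro w hw
          rw [mem_closedBall, dist_eq_norm]
          calc ‖w - a‖ ≤ ‖w‖ + ‖a‖ := norm_sub_le w a
            _ ≤ 2*t + t := by exact add_le_add hw.2 le_rfl
            _ = 3*t := by ring
      _ ≤ ENNReal.ofReal ((t/2) ^ (-(2/3):ℝ)) *
            (ENNReal.ofReal ((3*t) ^ (2 - 4/3 : ℝ) * 2 ^ (4/3 : ℝ)) *
              ((1 - ENNReal.ofReal ((2:ℝ) ^ (4/3 - 2 : ℝ)))⁻¹ * V)) := by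
          gcongr
          exact lemA (p := 4/3) (by norm_num) (by norm_num) a h3t
      _ = E2 := by
          rw [hE2, ← mul_assoc, ← ENNReal.ofReal_mul (Real.rpow_pos_of_pos ht2 _).le]
          congr 2
          have h1 : ((3*t):ℝ) ^ ((2:ℝ) - 4/3) = (3*t) ^ ((2:ℝ)/3) := by norm_num
          calc (t/2) ^ (-(2/3):ℝ) * ((3*t) ^ (2 - 4/3 : ℝ) * 2 ^ ((4:ℝ)/3))
              = ((3*t) ^ ((2:ℝ)/3) / (t/2) ^ ((2:ℝ)/3)) * 2 ^ ((4:ℝ)/3) := by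
                rw [h1, Real.rpow_neg ht2.le]
                ring
            _ = ((3*t)/(t/2)) ^ ((2:ℝ)/3) * 2 ^ ((4:ℝ)/3) := by
                rw [Real.div_rpow h3t.le ht2.le]
            _ = (6:ℝ) ^ ((2:ℝ)/3) * 2 ^ ((4:ℝ)/3) := by
                rw [show (3*t)/(t/2) = (6:ℝ) by field_simp; ring]
  -- P3 estimate
  set N : ℕ := ⌈Real.logb 2 (ρ/(2*t))⌉₊ with hN
  have h2t : 0 < 2*t := by linarith
  have hNspec : ρ ≤ 2*t * 2 ^ N := by
    rcases le_or_gt ρ (2*t) with h | h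
    · calc ρ ≤ 2*t := h
        _ ≤ 2*t * 2^N := by
            have h1 : (1:ℝ) ≤ 2^N := one_le_pow₀ (by norm_num)
            nlinarith
    · have hq : 1 < ρ/(2*t) := (one_lt_div h2t).2 h
      have h1 : ρ/(2*t) = 2 ^ Real.logb 2 (ρ/(2*t)) :=
        (Real.rpow_logb (by norm_num) (by norm_num) (by linarith)).symm
      have h2 : (2:ℝ) ^ Real.logb 2 (ρ/(2*t)) ≤ 2 ^ ((N:ℝ)) :=
        Real.rpow_le_rpow_of_exponent_le one_le_two (Nat.le_ceil _)
      rw [Real.rpow_natCast] at h2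
      calc ρ = 2*t * (ρ/(2*t)) := by field_simp
        _ ≤ 2*t * 2^N := by rw [h1]; exact mul_le_mul_of_nonneg_left h2 h2t.le
  have hpt3 : ∀ w ∈ P3, F w ≤
      ENNReal.ofReal ((2:ℝ)^((4:ℝ)/3)) * ((‖w‖₊:ℝ≥0∞)) ^ (-2:ℝ) := by
    intro w hw
    have hw0 : 0 < ‖w‖ := lt_trans h2t hw.1
    have hhalf : ‖w‖/2 ≤ ‖w - a‖ := by
      have h1 : ‖w‖ - ‖a‖ ≤ ‖w - a‖ := norm_sub_norm_le w a
      have : t ≤ ‖w‖/2 := by linarith [hw.1]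
      linarith
    have h2 : ((‖w - a‖₊:ℝ≥0∞)) ^ (-(4/3):ℝ) ≤ ENNReal.ofReal ((‖w‖/2) ^ (-(4/3):ℝ)) := by
      refine rpow_neg_le (by norm_num) (by linarith) ?_
      rw [← enorm_eq_nnnorm, ← ofReal_norm]
      exact ENNReal.ofReal_le_ofReal hhalf
    have h3 : ((‖w‖₊:ℝ≥0∞)) ^ (-(2/3):ℝ) = ENNReal.ofReal (‖w‖ ^ (-(2/3):ℝ)) := by
      rw [← enorm_eq_nnnorm, ← ofReal_norm, ENNReal.ofReal_rpow_of_pos hw0]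
    have h4 : ((‖w‖₊:ℝ≥0∞)) ^ (-2:ℝ) = ENNReal.ofReal (‖w‖ ^ (-2:ℝ)) := by
      rw [← enorm_eq_nnnorm, ← ofReal_norm, ENNReal.ofReal_rpow_of_pos hw0]
    calc F w ≤ ENNReal.ofReal (‖w‖ ^ (-(2/3):ℝ)) * ENNReal.ofReal ((‖w‖/2) ^ (-(4/3):ℝ)) := by
          rw [hF]; dsimp only; rw [h3]; exact mul_le_mul_right h2 _
      _ = ENNReal.ofReal (‖w‖ ^ (-(2/3):ℝ) * (‖w‖/2) ^ (-(4/3):ℝ)) :=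
          (ENNReal.ofReal_mul (Real.rpow_pos_of_pos hw0 _).le).symm
      _ = ENNReal.ofReal ((2:ℝ)^((4:ℝ)/3) * ‖w‖ ^ (-2:ℝ)) := by
          congr 1
          have e1 : (‖w‖/2) ^ (-(4/3):ℝ) = ‖w‖ ^ (-(4/3):ℝ) * (2:ℝ) ^ ((4:ℝ)/3) := by
            rw [Real.div_rpow hw0.le (by norm_num), Real.rpow_neg hw0.le,
              Real.rpow_neg (by norm_num : (0:ℝ) ≤ 2), div_eq_mul_inv, inv_inv,
              ← Real.rpow_neg hw0.le]
          rw [e1, ← mul_assoc, ← Real.rpow_add hw0,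
            show (-(2/3) + -(4/3) : ℝ) = -2 by norm_num]
          ring
      _ = ENNReal.ofReal ((2:ℝ)^((4:ℝ)/3)) * ((‖w‖₊:ℝ≥0∞)) ^ (-2:ℝ) := by
          rw [h4, ENNReal.ofReal_mul (by positivity)]
  have I3 : (∫⁻ w in P3, F w) ≤ ENNReal.ofReal (c3 * (1 + x)) := by
    have hNR : (N:ℝ) ≤ Kρ * (1 + x) := by
      set L : ℝ := Real.logb 2 (ρ/(2*t)) with hL
      have hceil : (N:ℝ) ≤ max L 0 + 1 := by
        rcases le_or_gt L 0 with h | h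
        · rw [hN, Nat.ceil_eq_zero.2 h]
          have := le_max_right L (0:ℝ)
          simp only [Nat.cast_zero]
          linarith
        · have h1 : (N:ℝ) < L + 1 := by
            rw [hN]
            exact Nat.ceil_lt_add_one h.le
          have := le_max_left L (0:ℝ)
          linarith
      have hLle : L ≤ 2*(|Real.log ρ| + Real.log 2 + x) := by
        have hlog : Real.log (ρ/(2*t)) = Real.log ρ - (Real.log 2 + Real.log t) := by
          rw [Real.log_div hρ.ne' h2t.ne', Real.log_mul (by norm_num) ht.ne']
        have habs : Real.log (ρ/(2*t)) ≤ |Real.log ρ| + Real.log 2 + x := by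
          rw [hlog, hx]
          have h1 := le_abs_self (Real.log ρ)
          have h2 : -(Real.log t) ≤ |Real.log t| := neg_le_abs _
          linarith
        have hpos : (0:ℝ) < Real.log 2 := by linarith
        rw [hL, Real.logb, div_le_iff₀ hpos]
        nlinarith [abs_nonneg (Real.log ρ), abs_nonneg (Real.log t), habs]
      have hmax : max L 0 ≤ 2*(|Real.log ρ| + Real.log 2 + x) := by
        apply max_le hLle
        positivity
      rw [hKρ]
      nlinarith [abs_nonneg (Real.log ρ), abs_nonneg (Real.log t), hxnn]
    calc (∫⁻ w in P3, F w)
        ≤ ∫⁻ w in P3, ENNReal.ofReal ((2:ℝ)^((4:ℝ)/3)) * ((‖w‖₊:ℝ≥0∞)) ^ (-2:ℝ) :=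
          setLIntegral_mono' mP3 hpt3
      _ = ENNReal.ofReal ((2:ℝ)^((4:ℝ)/3)) * ∫⁻ w in P3, ((‖w‖₊:ℝ≥0∞)) ^ (-2:ℝ) :=
          lintegral_const_mul' _ _ ENNReal.ofReal_ne_top
      _ ≤ ENNReal.ofReal ((2:ℝ)^((4:ℝ)/3)) *
            ∫⁻ w in {w : ℂ | 2*t ≤ ‖w‖ ∧ ‖w‖ < ρ}, ((‖w‖₊:ℝ≥0∞)) ^ (-2:ℝ) := by
          gcongr
          exact fun w hw => ⟨hw.1.le, hw.2⟩
      _ ≤ ENNReal.ofReal ((2:ℝ)^((4:ℝ)/3)) * (N * (4 * V)) := by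
          gcongr
          exact lemB N h2t hNspec
      _ = ENNReal.ofReal ((2:ℝ)^((4:ℝ)/3)) * (ENNReal.ofReal (N:ℝ) * ENNReal.ofReal W) := by
          rw [← h4V, ENNReal.ofReal_natCast]
      _ = ENNReal.ofReal ((2:ℝ)^((4:ℝ)/3) * ((N:ℝ) * W)) := by
          rw [ENNReal.ofReal_mul (by positivity), ENNReal.ofReal_mul (by positivity)]
      _ ≤ ENNReal.ofReal (c3 * (1 + x)) := by
          apply ENNReal.ofReal_le_ofReal
          rw [hc3]
          have h2p : (0:ℝ) ≤ 2^((4:ℝ)/3) := by positivity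
          calc (2:ℝ)^((4:ℝ)/3) * ((N:ℝ) * W) ≤ (2:ℝ)^((4:ℝ)/3) * ((Kρ * (1+x)) * W) := by
                apply mul_le_mul_of_nonneg_left _ h2p
                exact mul_le_mul_of_nonneg_right hNR hWnn
            _ = 2^((4:ℝ)/3) * W * Kρ * (1 + x) := by ring
  -- combine
  calc (∫⁻ w in ball (0:ℂ) ρ, F w)
      ≤ ∫⁻ w in (P1 ∪ P2 ∪ P3 : Set ℂ), F w := lintegral_mono_set hcover
    _ ≤ (∫⁻ w in (P1 ∪ P2 : Set ℂ), F w) + ∫⁻ w in P3, F w := lintegral_union_le _ _ _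
    _ ≤ ((∫⁻ w in P1, F w) + ∫⁻ w in P2, F w) + ∫⁻ w in P3, F w :=
        add_le_add (lintegral_union_le _ _ _) le_rfl
    _ ≤ (E1 + E2) + ENNReal.ofReal (c3 * (1 + x)) :=
        add_le_add (add_le_add I1 I2) I3
    _ ≤ ENNReal.ofReal (((E1 + E2).toReal + c3 + 1) * (1 + x)) := by
        have hsum : E1 + E2 = ENNReal.ofReal ((E1+E2).toReal) :=
          (ENNReal.ofReal_toReal (ENNReal.add_ne_top.2 ⟨hE1top, hE2top⟩)).symm
        have hs : (0:ℝ) ≤ (E1+E2).toReal := ENNReal.toReal_nonneg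
        calc (E1 + E2) + ENNReal.ofReal (c3 * (1 + x))
            ≤ ENNReal.ofReal ((E1+E2).toReal) + ENNReal.ofReal (c3 * (1 + x)) :=
              add_le_add hsum.le le_rfl
          _ = ENNReal.ofReal ((E1+E2).toReal + c3 * (1 + x)) :=
              (ENNReal.ofReal_add hs (by positivity)).symm
          _ ≤ ENNReal.ofReal (((E1 + E2).toReal + c3 + 1) * (1 + x)) := by
              apply ENNReal.ofReal_le_ofReal
              nlinarith [mul_nonneg hs hxnn, mul_nonneg hc3nn hxnn]

lemma enorm_one_div_le (z : ℂ) : (‖1/z‖₊ : ℝ≥0∞) ≤ ((‖z‖₊ : ℝ≥0∞))⁻¹ := by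
  rcases eq_or_ne z 0 with rfl | hz
  · simp
  · rw [one_div, nnnorm_inv, ENNReal.coe_inv (by simpa using hz)]

lemma one_add_rpow {x : ℝ} (hx : 0 ≤ x) : (1+x) ^ ((3:ℝ)/4) ≤ 1 + x ^ ((3:ℝ)/4) := by
  have h := NNReal.rpow_add_le_add_rpow 1 x.toNNReal (by norm_num) (by norm_num : (3:ℝ)/4 ≤ 1)
  have h2 := NNReal.coe_le_coe.2 h
  rw [NNReal.coe_rpow, NNReal.coe_add, NNReal.coe_add, NNReal.coe_rpow, NNReal.coe_rpow,
    NNReal.coe_one, Real.coe_toNNReal x hx] at h2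
  simpa using h2


end
end L2210

open MeasureTheory Complex L2210 in
/-- For `p = 4/3` and every `R > 0` there is a constant `C = C(R) > 0` such
that for every `a ∈ ℂ` with `a ≠ 0`, the `L^{4/3}` norm of `u ↦ 1/(u(√u − a))` over the disk
`{|u| < R}` is at most `C (1 + |ln |a||^{3/4})`. -/
theorem lemma_2210A_critical_p :
    ∀ R : ℝ, 0 < R →
      ∃ C : ℝ, 0 < C ∧
        ∀ a : ℂ, a ≠ 0 →
          eLpNorm (fun u : ℂ => 1 / (u * (u ^ (1/2 : ℂ) - a)))
              (ENNReal.ofReal (4/3)) (volume.restrict {u : ℂ | ‖u‖ < R})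
            ≤ ENNReal.ofReal (C * (1 + |Real.log ‖a‖| ^ (3/4 : ℝ))) := by
  intro R hR
  set ρ : ℝ := Real.sqrt R with hρdef
  have hρ : 0 < ρ := Real.sqrt_pos.2 hR
  obtain ⟨K, hK, hKest⟩ := main_est hρ
  refine ⟨(4*K) ^ ((3:ℝ)/4), Real.rpow_pos_of_pos (by linarith) _, fun a ha => ?_⟩
  set f : ℂ → ℂ := fun u : ℂ => 1 / (u * (u ^ (1/2 : ℂ) - a)) with hf
  set x : ℝ := |Real.log ‖a‖| with hx
  have hxnn : 0 ≤ x := abs_nonneg _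
  have hset : {u : ℂ | ‖u‖ < R} = ball (0:ℂ) R := by
    ext u
    simp [mem_ball, dist_zero_right]
  -- the square-root region
  set S : Set ℂ := {w : ℂ | 0 < w.re} ∩ ball (0:ℂ) ρ with hS
  have mS : MeasurableSet S := by
    apply MeasurableSet.inter
    · exact measurableSet_lt measurable_const Complex.measurable_re
    · exact measurableSet_ball
  have hderiv : ∀ w ∈ S, HasFDerivWithinAt (fun z : ℂ => z ^ 2) (Dmul (2 * w)) S w :=
    fun w _ => (hasFDerivAt_sq w).hasFDerivWithinAt
  have hinj : InjOn (fun w : ℂ => w ^ 2) S := injOn_sq.mono inter_subset_left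
  -- main lintegral bound
  have hJ : (∫⁻ u in ball (0:ℂ) R, ((‖f u‖₊ : ℝ≥0∞)) ^ ((4:ℝ)/3))
      ≤ ENNReal.ofReal (4*K*(1+x)) := by
    have hae : (ball (0:ℂ) R ∩ Complex.slitPlane : Set ℂ) =ᵐ[volume] ball (0:ℂ) R := by
      rw [ae_eq_set]
      constructor
      · have : (ball (0:ℂ) R ∩ Complex.slitPlane) \ ball (0:ℂ) R = ∅ := by
          apply diff_eq_empty.2 inter_subset_left
        rw [this]; exact measure_empty
      · apply measure_mono_null (t := {z : ℂ | z.re ≤ 0 ∧ z.im = 0}) _ slit_null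
        intro u hu
        rw [← compl_slitPlane]
        exact fun hmem => hu.2 ⟨hu.1, hmem⟩
    have hpt : ∀ w ∈ S,
        ENNReal.ofReal |(Dmul (2 * w)).det| * ((‖f (w^2)‖₊ : ℝ≥0∞)) ^ ((4:ℝ)/3)
          ≤ 4 * (((‖w‖₊:ℝ≥0∞)) ^ (-(2/3):ℝ) * ((‖w - a‖₊:ℝ≥0∞)) ^ (-(4/3):ℝ)) := by
      intro w hw
      have hre : 0 < w.re := hw.1
      have hw0 : w ≠ 0 := by
        intro h; rw [h] at hre; simp at hre
      have hnn0 : (‖w‖₊ : ℝ≥0∞) ≠ 0 := by simpa using hw0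
      have hnnt : (‖w‖₊ : ℝ≥0∞) ≠ ⊤ := ENNReal.coe_ne_top
      have hdet : ENNReal.ofReal |(Dmul (2 * w)).det| = 4 * ((‖w‖₊:ℝ≥0∞)) ^ (2:ℝ) := by
        rw [det_Dmul, _root_.abs_of_nonneg (Complex.normSq_nonneg _)]
        have h1 : Complex.normSq (2*w) = 4 * ‖w‖^2 := by
          rw [Complex.normSq_mul, Complex.sq_norm]
          congr 1
          simp [Complex.normSq_apply]
          norm_num
        rw [h1, ENNReal.ofReal_mul (by norm_num)]
        congr 1
        · norm_num
        · rw [← enorm_eq_nnnorm, ← ofReal_norm, ENNReal.ofReal_rpow_of_nonneg (norm_nonneg w) (by norm_num),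
            Real.rpow_two]
      have hfval : f (w^2) = 1 / (w^2 * (w - a)) := by
        rw [hf]
        dsimp only
        rw [show (1/2 : ℂ) = (2⁻¹ : ℂ) by norm_num, Complex.sq_cpow_two_inv hre]
      have hg : ((‖f (w^2)‖₊ : ℝ≥0∞)) ^ ((4:ℝ)/3) ≤
          (((‖w‖₊:ℝ≥0∞)) ^ (2:ℝ)) ^ (-(4/3):ℝ) * ((‖w - a‖₊:ℝ≥0∞)) ^ (-(4/3):ℝ) := by
        have h1 : ((‖f (w^2)‖₊ : ℝ≥0∞)) ≤ ((‖w^2 * (w - a)‖₊ : ℝ≥0∞))⁻¹ := by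
          rw [hfval]; exact enorm_one_div_le _
        have h2 : ((‖w^2 * (w - a)‖₊ : ℝ≥0∞))⁻¹ =
            ((((‖w‖₊:ℝ≥0∞)) ^ (2:ℝ)))⁻¹ * (((‖w - a‖₊:ℝ≥0∞)))⁻¹ := by
          rw [nnnorm_mul, nnnorm_pow, ENNReal.coe_mul, ENNReal.coe_pow,
            ENNReal.mul_inv (Or.inr ENNReal.coe_ne_top) (Or.inl ?_)]
          · congr 1
            rw [← ENNReal.rpow_natCast]
            norm_num
          · exact ENNReal.pow_ne_top ENNReal.coe_ne_top
        calc ((‖f (w^2)‖₊ : ℝ≥0∞)) ^ ((4:ℝ)/3)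
            ≤ (((((‖w‖₊:ℝ≥0∞)) ^ (2:ℝ)))⁻¹ * (((‖w - a‖₊:ℝ≥0∞)))⁻¹) ^ ((4:ℝ)/3) := by
              rw [← h2]
              exact ENNReal.rpow_le_rpow h1 (by norm_num)
          _ = (((‖w‖₊:ℝ≥0∞)) ^ (2:ℝ)) ^ (-(4/3):ℝ) * ((‖w - a‖₊:ℝ≥0∞)) ^ (-(4/3):ℝ) := by
              rw [ENNReal.mul_rpow_of_nonneg _ _ (by norm_num : (0:ℝ) ≤ 4/3),
                ENNReal.inv_rpow, ENNReal.inv_rpow, ← ENNReal.rpow_neg, ← ENNReal.rpow_neg]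
      calc ENNReal.ofReal |(Dmul (2 * w)).det| * ((‖f (w^2)‖₊ : ℝ≥0∞)) ^ ((4:ℝ)/3)
          ≤ (4 * ((‖w‖₊:ℝ≥0∞)) ^ (2:ℝ)) *
            ((((‖w‖₊:ℝ≥0∞)) ^ (2:ℝ)) ^ (-(4/3):ℝ) * ((‖w - a‖₊:ℝ≥0∞)) ^ (-(4/3):ℝ)) := by
            rw [hdet]
            exact mul_le_mul_right hg _
        _ = 4 * (((‖w‖₊:ℝ≥0∞)) ^ (-(2/3):ℝ) * ((‖w - a‖₊:ℝ≥0∞)) ^ (-(4/3):ℝ)) := by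
            rw [← ENNReal.rpow_mul, mul_assoc, ← mul_assoc (((‖w‖₊:ℝ≥0∞)) ^ (2:ℝ)),
              ← ENNReal.rpow_add _ _ hnn0 hnnt,
              show ((2:ℝ) + 2 * -(4/3)) = -(2/3) by norm_num]
    calc (∫⁻ u in ball (0:ℂ) R, ((‖f u‖₊ : ℝ≥0∞)) ^ ((4:ℝ)/3))
        = ∫⁻ u in (ball (0:ℂ) R ∩ Complex.slitPlane : Set ℂ), ((‖f u‖₊ : ℝ≥0∞)) ^ ((4:ℝ)/3) :=
          (setLIntegral_congr hae).symm
      _ ≤ ∫⁻ u in (fun w : ℂ => w ^ 2) '' S, ((‖f u‖₊ : ℝ≥0∞)) ^ ((4:ℝ)/3) := by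
          apply lintegral_mono_set
          rw [hS, hρdef]
          exact subset_image
      _ = ∫⁻ w in S, ENNReal.ofReal |(Dmul (2 * w)).det| * ((‖f (w^2)‖₊ : ℝ≥0∞)) ^ ((4:ℝ)/3) :=
          lintegral_image_eq_lintegral_abs_det_fderiv_mul volume mS hderiv hinj _
      _ ≤ ∫⁻ w in S,
            4 * (((‖w‖₊:ℝ≥0∞)) ^ (-(2/3):ℝ) * ((‖w - a‖₊:ℝ≥0∞)) ^ (-(4/3):ℝ)) :=
          setLIntegral_mono' mS hpt
      _ = 4 * ∫⁻ w in S, ((‖w‖₊:ℝ≥0∞)) ^ (-(2/3):ℝ) * ((‖w - a‖₊:ℝ≥0∞)) ^ (-(4/3):ℝ) :=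
          lintegral_const_mul' _ _ (by norm_num)
      _ ≤ 4 * ∫⁻ w in ball (0:ℂ) ρ,
            ((‖w‖₊:ℝ≥0∞)) ^ (-(2/3):ℝ) * ((‖w - a‖₊:ℝ≥0∞)) ^ (-(4/3):ℝ) := by
          apply mul_le_mul_right
          exact lintegral_mono_set inter_subset_right
      _ ≤ 4 * ENNReal.ofReal (K * (1 + x)) := mul_le_mul_right (hKest a ha) _
      _ = ENNReal.ofReal (4*K*(1+x)) := by
          rw [show (4:ℝ)*K*(1+x) = 4 * (K * (1+x)) by ring,
            ENNReal.ofReal_mul (by norm_num : (0:ℝ) ≤ 4), ENNReal.ofReal_ofNat]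
  -- conclude
  rw [hset, eLpNorm_eq_lintegral_rpow_enorm_toReal
      ((ENNReal.ofReal_pos.2 (by norm_num)).ne') ENNReal.ofReal_ne_top,
    ENNReal.toReal_ofReal (by norm_num : (0:ℝ) ≤ 4/3)]
  rw [show (1/((4:ℝ)/3)) = (3:ℝ)/4 by norm_num]
  calc (∫⁻ u in ball (0:ℂ) R, ((‖f u‖₊ : ℝ≥0∞)) ^ ((4:ℝ)/3)) ^ ((3:ℝ)/4)
      ≤ (ENNReal.ofReal (4*K*(1+x))) ^ ((3:ℝ)/4) := ENNReal.rpow_le_rpow hJ (by norm_num)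
    _ = ENNReal.ofReal ((4*K*(1+x)) ^ ((3:ℝ)/4)) :=
        ENNReal.ofReal_rpow_of_nonneg (by positivity) (by norm_num)
    _ ≤ ENNReal.ofReal ((4*K) ^ ((3:ℝ)/4) * (1 + x ^ ((3:ℝ)/4))) := by
        apply ENNReal.ofReal_le_ofReal
        rw [show (4:ℝ)*K*(1+x) = (4*K) * (1+x) by ring,
          Real.mul_rpow (by linarith) (by linarith)]
        exact mul_le_mul_of_nonneg_left (one_add_rpow hxnn) (by positivity)
end

section
/- Let U ⊆ ℂ be an open set, let ρ : U → ℂ be continuously (real-)differentiable with ρ(z) ≠ 0 for all z ∈ U, set γ = ρ², and let u : U → ℂ be twice continuously (real-)differentiable. Suppose u satisfies the conductivity equation div(γ ∇u) = 0 on U, i.e. ∂_x(γ ∂_x u) + ∂_y(γ ∂_y u) = 0, where z = x + iy. Then the functions φ₁ = ρ · ∂u and φ₂ = ρ · ∂̄u satisfy the Dirac system ∂̄φ₁ = q₁₂ φ₂ and ∂φ₂ = q₂₁ φ₁ on U, where q₁₂ = −(∂ρ)/ρ and q₂₁ = −(∂̄ρ)/ρ. -/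
open Complex

/-- The directional (real) partial derivative of `f : ℂ → ℂ` at `z` in the direction `v`. -/
noncomputable def pd (v : ℂ) (f : ℂ → ℂ) (z : ℂ) : ℂ := fderiv ℝ f z v

/-- The Wirtinger derivative `∂f = (∂_x f − i ∂_y f)/2`. -/
noncomputable def wirtinger (f : ℂ → ℂ) (z : ℂ) : ℂ :=
  (pd 1 f z - Complex.I * pd Complex.I f z) / 2

/-- The conjugate Wirtinger derivative `∂̄f = (∂_x f + i ∂_y f)/2`. -/
noncomputable def wirtingerBar (f : ℂ → ℂ) (z : ℂ) : ℂ :=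
  (pd 1 f z + Complex.I * pd Complex.I f z) / 2

lemma pd_mul {f g : ℂ → ℂ} {z : ℂ} (v : ℂ) (hf : DifferentiableAt ℝ f z)
    (hg : DifferentiableAt ℝ g z) :
    pd v (fun w => f w * g w) z = f z * pd v g z + g z * pd v f z := by
  simp [pd, fderiv_fun_mul hf hg]

lemma pd_lin {f g : ℂ → ℂ} {z : ℂ} (a b v : ℂ) (hf : DifferentiableAt ℝ f z)
    (hg : DifferentiableAt ℝ g z) :
    pd v (fun w => a * f w + b * g w) z = a * pd v f z + b * pd v g z := by
  simp only [pd]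
  rw [fderiv_fun_add (hf.const_mul a) (hg.const_mul b), fderiv_const_mul hf a,
    fderiv_const_mul hg b]
  simp

/-- **reduction of the conductivity equation to a Dirac system.**
Let `U ⊆ ℂ` be open, `ρ : U → ℂ` be `C¹` and nonvanishing on `U`, `γ = ρ²`, and let
`u : U → ℂ` be `C²` satisfying `div(γ ∇u) = 0` on `U`, i.e.
`∂_x(γ ∂_x u) + ∂_y(γ ∂_y u) = 0`. Then `φ₁ = ρ ∂u` and `φ₂ = ρ ∂̄u` satisfy the Dirac system
`∂̄φ₁ = q₁₂ φ₂`, `∂φ₂ = q₂₁ φ₁` on `U`, where `q₁₂ = −(∂ρ)/ρ` and `q₂₁ = −(∂̄ρ)/ρ`. -/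
theorem conductivity_to_dirac (U : Set ℂ) (hU : IsOpen U)
    (ρ : ℂ → ℂ) (hρ : ContDiffOn ℝ 1 ρ U) (hρ0 : ∀ z ∈ U, ρ z ≠ 0)
    (u : ℂ → ℂ) (hu : ContDiffOn ℝ 2 u U)
    (hcond : ∀ z ∈ U,
      pd 1 (fun w => (ρ w) ^ 2 * pd 1 u w) z +
        pd Complex.I (fun w => (ρ w) ^ 2 * pd Complex.I u w) z = 0) :
    ∀ z ∈ U,
      wirtingerBar (fun w => ρ w * wirtinger u w) z =
          (-(wirtinger ρ z) / ρ z) * (ρ z * wirtingerBar u z) ∧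
      wirtinger (fun w => ρ w * wirtingerBar u w) z =
          (-(wirtingerBar ρ z) / ρ z) * (ρ z * wirtinger u z) := by
  intro z hz
  have hzn : U ∈ nhds z := hU.mem_nhds hz
  have hρz : ρ z ≠ 0 := hρ0 z hz
  have hρ1 : ContDiffAt ℝ 1 ρ z := hρ.contDiffAt hzn
  have hu2 : ContDiffAt ℝ 2 u z := hu.contDiffAt hzn
  have hρd : DifferentiableAt ℝ ρ z := hρ1.differentiableAt (by norm_num)
  have hF : DifferentiableAt ℝ (fderiv ℝ u) z :=
    (hu2.fderiv_right (m := 1) (by norm_num)).differentiableAt (by norm_num)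
  have hpdu : ∀ w : ℂ, DifferentiableAt ℝ (pd w u) z := by
    intro w
    have := ((ContinuousLinearMap.apply ℝ ℂ w).differentiableAt).comp z hF
    exact this
  have hsecond : ∀ v w : ℂ, pd v (pd w u) z = fderiv ℝ (fderiv ℝ u) z v w := by
    intro v w
    have h := fderiv_clm_apply (c := fderiv ℝ u) (u := fun _ : ℂ => w) hF
      (differentiableAt_const w)
    show fderiv ℝ (fun y => (fderiv ℝ u y) ((fun _ : ℂ => w) y)) z v = _
    rw [h]
    simp
  set s11 := fderiv ℝ (fderiv ℝ u) z 1 1 with hs11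
  set s1I := fderiv ℝ (fderiv ℝ u) z 1 Complex.I with hs1I
  set sI1 := fderiv ℝ (fderiv ℝ u) z Complex.I 1 with hsI1
  set sII := fderiv ℝ (fderiv ℝ u) z Complex.I Complex.I with hsII
  have hsymm : s1I = sI1 := (hu2.isSymmSndFDerivAt (by norm_num)) 1 Complex.I
  -- conductivity expansion
  have hsq : ∀ v : ℂ, pd v (fun w => ρ w ^ 2) z = 2 * ρ z * pd v ρ z := by
    intro v
    have e : (fun w => ρ w ^ 2) = fun w => ρ w * ρ w := by funext w; ring
    rw [e, pd_mul v hρd hρd]; ring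
  have hc := hcond z hz
  rw [pd_mul (f := fun w => ρ w ^ 2) (g := pd 1 u) 1 (hρd.pow 2) (hpdu 1),
    pd_mul (f := fun w => ρ w ^ 2) (g := pd Complex.I u) Complex.I (hρd.pow 2)
      (hpdu Complex.I), hsq 1, hsq Complex.I, hsecond 1 1, hsecond Complex.I Complex.I] at hc
  have hkey : 2 * (pd 1 ρ z * pd 1 u z + pd Complex.I ρ z * pd Complex.I u z)
      + ρ z * (s11 + sII) = 0 := by
    apply mul_left_cancel₀ hρz
    rw [mul_zero]
    linear_combination hc
  -- derivatives of ρ * wirtinger u and ρ * wirtingerBar u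
  have e1 : (fun w => ρ w * wirtinger u w)
      = fun w => ρ w * ((2:ℂ)⁻¹ * pd 1 u w + (-Complex.I/2) * pd Complex.I u w) := by
    funext w; simp only [wirtinger]; ring
  have e2 : (fun w => ρ w * wirtingerBar u w)
      = fun w => ρ w * ((2:ℂ)⁻¹ * pd 1 u w + (Complex.I/2) * pd Complex.I u w) := by
    funext w; simp only [wirtingerBar]; ring
  have hg1 : DifferentiableAt ℝ
      (fun w => (2:ℂ)⁻¹ * pd 1 u w + (-Complex.I/2) * pd Complex.I u w) z :=
    ((hpdu 1).const_mul _).add ((hpdu Complex.I).const_mul _)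
  have hg2 : DifferentiableAt ℝ
      (fun w => (2:ℂ)⁻¹ * pd 1 u w + (Complex.I/2) * pd Complex.I u w) z :=
    ((hpdu 1).const_mul _).add ((hpdu Complex.I).const_mul _)
  have hpw1 : ∀ v : ℂ, pd v (fun w => ρ w * wirtinger u w) z
      = ρ z * ((2:ℂ)⁻¹ * pd v (pd 1 u) z + (-Complex.I/2) * pd v (pd Complex.I u) z)
        + ((2:ℂ)⁻¹ * pd 1 u z + (-Complex.I/2) * pd Complex.I u z) * pd v ρ z := by
    intro v
    rw [e1, pd_mul v hρd hg1, pd_lin _ _ v (hpdu 1) (hpdu Complex.I)]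
  have hpw2 : ∀ v : ℂ, pd v (fun w => ρ w * wirtingerBar u w) z
      = ρ z * ((2:ℂ)⁻¹ * pd v (pd 1 u) z + (Complex.I/2) * pd v (pd Complex.I u) z)
        + ((2:ℂ)⁻¹ * pd 1 u z + (Complex.I/2) * pd Complex.I u z) * pd v ρ z := by
    intro v
    rw [e2, pd_mul v hρd hg2, pd_lin _ _ v (hpdu 1) (hpdu Complex.I)]
  have hI2 : (Complex.I : ℂ) * Complex.I = -1 := Complex.I_mul_I
  constructor
  · show (pd 1 (fun w => ρ w * wirtinger u w) z
      + Complex.I * pd Complex.I (fun w => ρ w * wirtinger u w) z) / 2 = _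
    rw [hpw1 1, hpw1 Complex.I, hsecond 1 1, hsecond 1 Complex.I, hsecond Complex.I 1,
      hsecond Complex.I Complex.I]
    have hdiv : (-(wirtinger ρ z) / ρ z) * (ρ z * wirtingerBar u z)
        = -(wirtinger ρ z) * wirtingerBar u z := by field_simp
    rw [hdiv]
    simp only [wirtinger, wirtingerBar]
    linear_combination hkey/4 - (ρ z * Complex.I/4) * hsymm + (-(ρ z * sII)/4 - (pd Complex.I u z * pd Complex.I ρ z)/2) * Complex.I_sq
  · show (pd 1 (fun w => ρ w * wirtingerBar u w) z
      - Complex.I * pd Complex.I (fun w => ρ w * wirtingerBar u w) z) / 2 = _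
    rw [hpw2 1, hpw2 Complex.I, hsecond 1 1, hsecond 1 Complex.I, hsecond Complex.I 1,
      hsecond Complex.I Complex.I]
    have hdiv : (-(wirtingerBar ρ z) / ρ z) * (ρ z * wirtinger u z)
        = -(wirtingerBar ρ z) * wirtinger u z := by field_simp
    rw [hdiv]
    simp only [wirtinger, wirtingerBar]
    linear_combination hkey/4 + (ρ z * Complex.I/4) * hsymm + (-(ρ z * sII)/4 - (pd Complex.I u z * pd Complex.I ρ z)/2) * Complex.I_sq
end
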